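/- arXiv:0803.0148 — 13 statements merged into one kernel-verified Lean document; each statement's English description precedes it below -/
import Mathlib

section
/- Let A be a commutative semiring equipped with a linear order compatible with its operations (x ≤ z and y ≤ t imply x + y ≤ z + t and x·y ≤ z·t), such that 0 ≠ 1 and a + b = max(a, b) for all a, b ∈ A (a tropical halo). Then A has tempered growth: for every nonzero polynomial P with natural number coefficients and every x ∈ A, if x^n ≤ P(n) in A for all n ∈ ℕ (where the natural number P(n) is sent into A by the canonical map ℕ → A), then x ≤ 1. -/
/-- A tropical halo has tempered growth: if a commutative semiring `A` carries a
compatible linear order with `0 ≠ 1` and `a + b = max a b`, then for every nonzero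
polynomial `P` with natural coefficients and every `x : A`, `x ^ n ≤ P(n)` for all
`n : ℕ` implies `x ≤ 1`. -/
theorem tropical_halo_tempered_growth {A : Type*} [CommSemiring A] [LinearOrder A]
    (hadd : ∀ x y z t : A, x ≤ z → y ≤ t → x + y ≤ z + t)
    (hmul : ∀ x y z t : A, x ≤ z → y ≤ t → x * y ≤ z * t)
    (hne : (0 : A) ≠ 1)
    (htrop : ∀ a b : A, a + b = max a b) :
    ∀ P : Polynomial ℕ, P ≠ 0 →
      ∀ x : A, (∀ n : ℕ, x ^ n ≤ ((P.eval n : ℕ) : A)) → x ≤ 1 := by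
  intro P hP x hx
  -- cast of any positive natural is 1
  have hcast : ∀ m : ℕ, m ≠ 0 → ((m : ℕ) : A) = 1 := by
    intro m hm
    induction m with
    | zero => exact absurd rfl hm
    | succ k ih =>
      rcases Nat.eq_zero_or_pos k with hk | hk
      · simp [hk]
      · have : ((k + 1 : ℕ) : A) = (k : A) + 1 := by push_cast; ring
        rw [this, ih hk.ne', htrop, max_self]
  -- P.eval 1 ≠ 0
  have heval : P.eval 1 ≠ 0 := by
    intro h
    apply hP
    have hsum : ∀ i ∈ P.support, P.coeff i * 1 ^ i = 0 := by
      have := h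
      rw [Polynomial.eval_eq_sum, Polynomial.sum_def] at this
      exact (Finset.sum_eq_zero_iff).mp this
    ext i
    simp only [Polynomial.coeff_zero]
    by_cases hi : i ∈ P.support
    · have := hsum i hi; simpa using this
    · simpa using Polynomial.notMem_support_iff.mp hi
  have h1 := hx 1
  rw [pow_one, hcast _ heval] at h1
  exact h1
end

section
/- Let R be a commutative semifield equipped with a linear order compatible with its operations (x ≤ z and y ≤ t imply x + y ≤ z + t and x·y ≤ z·t) and with 0 < 1. Assume: (i) the canonical map ℕ → R is injective; (ii) whenever y < x in R there exists t ∈ R with t > 0 and x = y + t; (iii) R is archimedean: for all x, y ∈ R with x > y > 0 there exists n ∈ ℕ with n·y > x (n-fold sum). Then R has tempered growth: for every nonzero polynomial P with natural number coefficients and every x ∈ R, if x^n ≤ P(n) in R for all n ∈ ℕ (where the natural number P(n) is sent into R by the canonical map ℕ → R), then x ≤ 1. -/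
/-- An archimedean positive totally ordered aura in which `ℕ` injects and in which
`y < x` implies `x = y + t` for some `t > 0` has tempered growth. -/
theorem archimedean_aura_tempered_growth {R : Type*} [Semifield R] [LinearOrder R]
    (hadd : ∀ x y z t : R, x ≤ z → y ≤ t → x + y ≤ z + t)
    (hmul : ∀ x y z t : R, x ≤ z → y ≤ t → x * y ≤ z * t)
    (hpos : (0 : R) < 1)
    (hinj : Function.Injective (Nat.cast : ℕ → R))
    (hsub : ∀ x y : R, y < x → ∃ t : R, 0 < t ∧ x = y + t)
    (harch : ∀ x y : R, 0 < y → y < x → ∃ n : ℕ, x < n • y) :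
    ∀ P : Polynomial ℕ, P ≠ 0 →
      ∀ x : R, (∀ n : ℕ, x ^ n ≤ ((P.eval n : ℕ) : R)) → x ≤ 1 := by
  intro P hP x hx
  by_contra hx1
  push_neg at hx1
  obtain ⟨t, ht, hxt⟩ := hsub x 1 hx1
  -- basic monotonicity facts
  have mono_mul : ∀ a b c : R, a ≤ b → a * c ≤ b * c :=
    fun a b c h => hmul a c b c h le_rfl
  have cast_nonneg : ∀ n : ℕ, (0 : R) ≤ (n : R) := by
    intro n
    induction n with
    | zero => simp
    | succ m ih =>
      push_cast
      calc (0 : R) = 0 + 0 := by ring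
        _ ≤ (m : R) + 1 := hadd _ _ _ _ ih hpos.le
  have cast_mono : ∀ a b : ℕ, a ≤ b → (a : R) ≤ (b : R) := by
    intro a b hab
    obtain ⟨c, rfl⟩ := Nat.exists_eq_add_of_le hab
    push_cast
    calc (a : R) = a + 0 := by ring
      _ ≤ (a : R) + c := hadd _ _ _ _ le_rfl (cast_nonneg c)
  have one_le_xt : (1 : R) ≤ 1 + t := by
    calc (1 : R) = 1 + 0 := by ring
      _ ≤ 1 + t := hadd _ _ _ _ le_rfl ht.le
  have one_le_pow : ∀ n : ℕ, (1 : R) ≤ (1 + t) ^ n := by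
    intro n
    induction n with
    | zero => simp
    | succ m ih =>
      calc (1 : R) = 1 * 1 := by ring
        _ ≤ (1 + t) ^ m * (1 + t) := hmul _ _ _ _ ih one_le_xt
        _ = (1 + t) ^ (m + 1) := by ring
  have t_pow_nonneg : ∀ n : ℕ, (0 : R) ≤ t ^ n := by
    intro n
    induction n with
    | zero => simpa using hpos.le
    | succ m ih =>
      calc (0 : R) = 0 * 0 := by ring
        _ ≤ t ^ m * t := hmul _ _ _ _ ih ht.le
        _ = t ^ (m + 1) := by ring
  -- the key binomial inequality
  have key : ∀ n j : ℕ, ((n.choose j : ℕ) : R) * t ^ j ≤ (1 + t) ^ n := by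
    intro n
    induction n with
    | zero =>
      intro j
      match j with
      | 0 => simp
      | j + 1 => simpa using hpos.le
    | succ m ih =>
      intro j
      match j with
      | 0 =>
        simpa using one_le_pow (m + 1)
      | j + 1 =>
        have h1 : ((m.choose j : ℕ) : R) * t ^ j * t ≤ (1 + t) ^ m * t :=
          hmul _ _ _ _ (ih j) le_rfl
        have h2 : ((m.choose (j + 1) : ℕ) : R) * t ^ (j + 1) ≤ (1 + t) ^ m := ih (j + 1)
        calc (((m + 1).choose (j + 1) : ℕ) : R) * t ^ (j + 1)
            = ((m.choose j + m.choose (j + 1) : ℕ) : R) * t ^ (j + 1) := by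
              rw [Nat.choose_succ_succ]
          _ = ((m.choose j : ℕ) : R) * t ^ j * t
              + ((m.choose (j + 1) : ℕ) : R) * t ^ (j + 1) := by
              push_cast; ring
          _ ≤ (1 + t) ^ m * t + (1 + t) ^ m := hadd _ _ _ _ h1 h2
          _ = (1 + t) ^ (m + 1) := by ring
  set d : ℕ := P.natDegree with hd
  set k : ℕ := d + 1 with hk
  set u : R := t ^ k with hu
  have hu0 : (0 : R) < u := by
    have hne : u ≠ 0 := pow_ne_zero _ (ne_of_gt ht)
    exact lt_of_le_of_ne (t_pow_nonneg k) (Ne.symm hne)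
  -- from the hypothesis: choose n k * u ≤ P(n) in R
  have main : ∀ n : ℕ, ((n.choose k : ℕ) : R) * u ≤ ((P.eval n : ℕ) : R) := by
    intro n
    calc ((n.choose k : ℕ) : R) * u ≤ (1 + t) ^ n := key n k
      _ = x ^ n := by rw [hxt]
      _ ≤ ((P.eval n : ℕ) : R) := hx n
  -- natural number asymptotics
  have hP1 : ∀ n : ℕ, 1 ≤ n → 1 ≤ P.eval n := by
    intro n hn
    have hc : 1 ≤ P.coeff d := Nat.one_le_iff_ne_zero.mpr (by
      rw [hd, Polynomial.coeff_natDegree]; exact Polynomial.leadingCoeff_ne_zero.mpr hP)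
    rw [Polynomial.eval_eq_sum_range, ← hd]
    have hmem : d ∈ Finset.range (d + 1) := Finset.self_mem_range_succ d
    have hsingle : P.coeff d * n ^ d ≤ ∑ i ∈ Finset.range (d + 1), P.coeff i * n ^ i :=
      Finset.single_le_sum (f := fun i => P.coeff i * n ^ i) (fun i _ => Nat.zero_le _) hmem
    have : 1 ≤ P.coeff d * n ^ d :=
      Nat.one_le_iff_ne_zero.mpr (Nat.mul_ne_zero (by omega) (by positivity))
    omega
  set E : ℕ := ∑ i ∈ Finset.range (d + 1), P.coeff i with hE
  have hPE : ∀ n : ℕ, 1 ≤ n → P.eval n ≤ E * n ^ d := by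
    intro n hn
    rw [Polynomial.eval_eq_sum_range, ← hd, hE, Finset.sum_mul]
    apply Finset.sum_le_sum
    intro i hi
    have hi' : i ≤ d := by
      have := Finset.mem_range.mp hi; omega
    exact Nat.mul_le_mul_left _ (Nat.pow_le_pow_right hn hi')
  have hchoose : ∀ n : ℕ, (n + 1 - k) ^ k ≤ k.factorial * n.choose k := by
    intro n
    rw [← Nat.descFactorial_eq_factorial_mul_choose]
    exact n.pow_sub_le_descFactorial k
  have hE1 : 1 ≤ E := by
    have hc : 1 ≤ P.coeff d := Nat.one_le_iff_ne_zero.mpr (by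
      rw [hd, Polynomial.coeff_natDegree]; exact Polynomial.leadingCoeff_ne_zero.mpr hP)
    have : P.coeff d ≤ E := Finset.single_le_sum (f := fun i => P.coeff i)
      (fun i _ => Nat.zero_le _) (Finset.self_mem_range_succ d)
    omega
  -- for every m there is n with 1 ≤ P(n) and m * P(n) ≤ choose n k
  have asymp : ∀ m : ℕ, ∃ n : ℕ, 1 ≤ P.eval n ∧ m * P.eval n ≤ n.choose k := by
    intro m
    set B : ℕ := k.factorial * m * E * 2 ^ d with hB
    refine ⟨2 * k + B, hP1 _ (by omega), ?_⟩
    set n : ℕ := 2 * k + B with hn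
    have hn1 : 1 ≤ n := by omega
    have hsub' : n + 1 - k = k + B + 1 := by omega
    have hfac : 1 ≤ k.factorial := Nat.one_le_iff_ne_zero.mpr (Nat.factorial_ne_zero k)
    have step1 : n ^ d ≤ 2 ^ d * (n + 1 - k) ^ d := by
      calc n ^ d ≤ (2 * (n + 1 - k)) ^ d := Nat.pow_le_pow_left (by omega) d
        _ = 2 ^ d * (n + 1 - k) ^ d := by rw [Nat.mul_pow]
    have step2 : k.factorial * (m * P.eval n) ≤ (n + 1 - k) ^ k := by
      calc k.factorial * (m * P.eval n)
          ≤ k.factorial * (m * (E * n ^ d)) :=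
            Nat.mul_le_mul_left _ (Nat.mul_le_mul_left _ (hPE n hn1))
        _ = k.factorial * m * E * n ^ d := by ring
        _ ≤ k.factorial * m * E * (2 ^ d * (n + 1 - k) ^ d) :=
            Nat.mul_le_mul_left _ step1
        _ = B * (n + 1 - k) ^ d := by rw [hB]; ring
        _ ≤ (n + 1 - k) * (n + 1 - k) ^ d := Nat.mul_le_mul_right _ (by omega)
        _ = (n + 1 - k) ^ k := by rw [hk]; ring
    have step3 : k.factorial * (m * P.eval n) ≤ k.factorial * n.choose k :=
      le_trans step2 (hchoose n)
    exact Nat.le_of_mul_le_mul_left step3 (by omega)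
  -- conclude: m * u ≤ 1 for every m
  have bound : ∀ m : ℕ, (m : R) * u ≤ 1 := by
    intro m
    obtain ⟨n, hn1, hn2⟩ := asymp m
    set p : R := ((P.eval n : ℕ) : R) with hp
    have hpne : p ≠ 0 := by
      intro h
      have : P.eval n = 0 := hinj (by simpa [hp] using h)
      omega
    have h1 : ((m * P.eval n : ℕ) : R) * u ≤ ((n.choose k : ℕ) : R) * u :=
      mono_mul _ _ _ (cast_mono _ _ hn2)
    have h2 : (m : R) * p * u ≤ p := by
      calc (m : R) * p * u = ((m * P.eval n : ℕ) : R) * u := by push_cast [hp]; ring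
        _ ≤ ((n.choose k : ℕ) : R) * u := h1
        _ ≤ p := main n
    have h3 : (m : R) * p * u * p⁻¹ ≤ p * p⁻¹ := mono_mul _ _ _ h2
    have h4 : p * p⁻¹ = 1 := mul_inv_cancel₀ hpne
    calc (m : R) * u = (m : R) * p * u * p⁻¹ := by
          field_simp
      _ ≤ p * p⁻¹ := h3
      _ = 1 := h4
  -- archimedean contradiction
  rcases lt_or_ge u 1 with hu1 | hu1
  · obtain ⟨n, hn⟩ := harch 1 u hu0 hu1
    have : (n : R) * u ≤ 1 := bound n
    rw [nsmul_eq_mul] at hn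
    exact absurd (lt_of_lt_of_le hn this) (lt_irrefl 1)
  · have h2 : (1 : R) < ((2 : ℕ) : R) := by
      refine lt_of_le_of_ne (by simpa using cast_mono 1 2 (by omega)) ?_
      intro h
      have := hinj (show ((1 : ℕ) : R) = ((2 : ℕ) : R) by simpa using h)
      omega
    have : ((2 : ℕ) : R) ≤ ((2 : ℕ) : R) * u := by
      calc ((2 : ℕ) : R) = ((2 : ℕ) : R) * 1 := by ring
        _ ≤ ((2 : ℕ) : R) * u := hmul _ _ _ _ le_rfl hu1
    have hle : ((2 : ℕ) : R) * u ≤ 1 := bound 2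
    exact absurd (lt_of_lt_of_le h2 (le_trans this hle)) (lt_irrefl 1)
end

section
/- Let A be a commutative ring, R a positive totally ordered aura, and |·| : A → R a pre-archimedean seminorm, i.e., |a + b| ≤ max(|2|, 1)·max(|a|, |b|) for all a, b ∈ A, where 2 denotes the image of 2 ∈ ℤ in A. Then the following are equivalent: (1) |·| is non-archimedean, i.e., |a + b| ≤ max(|a|, |b|) for all a, b ∈ A; (2) |n| ≤ 1 for every n ∈ ℕ (image of n in A); (3) |2| ≤ 1. -/
/-- For a pre-archimedean seminorm `|·| : A → R`, the following are equivalent: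
(1) `|·|` is non-archimedean; (2) `|n| ≤ 1` for all `n : ℕ`; (3) `|2| ≤ 1`. -/
theorem prearchimedean_nonarchimedean_iff {A : Type*} [CommRing A]
    {R : Type*} [Semifield R] [LinearOrder R]
    (hadd : ∀ x y z t : R, x ≤ z → y ≤ t → x + y ≤ z + t)
    (hmul : ∀ x y z t : R, x ≤ z → y ≤ t → x * y ≤ z * t)
    (hpos : (0 : R) < 1)
    (f : A → R)
    (hf0 : f 0 = 0) (hf1 : f 1 = 1)
    (hfm : ∀ a b : A, f (a * b) ≤ f a * f b)
    (hfa : ∀ a b : A, f (a + b) ≤ f a + f b)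
    (hpa : ∀ a b : A, f (a + b) ≤ max (f ((2 : ℤ) : A)) 1 * max (f a) (f b)) :
    ((∀ a b : A, f (a + b) ≤ max (f a) (f b)) ↔ (∀ n : ℕ, f ((n : ℕ) : A) ≤ 1)) ∧
      ((∀ n : ℕ, f ((n : ℕ) : A) ≤ 1) ↔ f ((2 : ℤ) : A) ≤ 1) := by
  have h2cast : ((2 : ℤ) : A) = ((2 : ℕ) : A) := by push_cast; ring
  have h31 : f ((2 : ℤ) : A) ≤ 1 → ∀ a b : A, f (a + b) ≤ max (f a) (f b) := by
    intro h2 a b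
    have := hpa a b
    rwa [max_eq_right h2, one_mul] at this
  have h12 : (∀ a b : A, f (a + b) ≤ max (f a) (f b)) → ∀ n : ℕ, f ((n : ℕ) : A) ≤ 1 := by
    intro h n
    induction n with
    | zero => simpa [hf0] using hpos.le
    | succ k ih =>
      have e : ((k + 1 : ℕ) : A) = ((k : ℕ) : A) + 1 := by push_cast; ring
      have := h ((k : ℕ) : A) 1
      rw [hf1] at this
      rw [e]
      exact this.trans (max_le ih le_rfl)
  have h23 : (∀ n : ℕ, f ((n : ℕ) : A) ≤ 1) → f ((2 : ℤ) : A) ≤ 1 := by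
    intro h
    rw [h2cast]
    exact h 2
  exact ⟨⟨h12, fun h => h31 (h23 h)⟩, ⟨h23, fun h => h12 (h31 h)⟩⟩
end

section
/- Let A be a commutative ring, R a positive totally ordered aura with tempered growth, and |·| : A → R a power-multiplicative seminorm. Then |·| is pre-archimedean: |a + b| ≤ max(|2|, 1)·max(|a|, |b|) for all a, b ∈ A, where 2 denotes the image of 2 ∈ ℤ in A. -/
/-- A tempered power-multiplicative seminorm on a ring is pre-archimedean:
`|a + b| ≤ max(|2|, 1) · max(|a|, |b|)` for all `a, b`. -/
theorem tempered_powmult_prearchimedean {A : Type*} [CommRing A]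
    {R : Type*} [Semifield R] [LinearOrder R]
    (hadd : ∀ x y z t : R, x ≤ z → y ≤ t → x + y ≤ z + t)
    (hmul : ∀ x y z t : R, x ≤ z → y ≤ t → x * y ≤ z * t)
    (hpos : (0 : R) < 1)
    (htemp : ∀ P : Polynomial ℕ, P ≠ 0 →
      ∀ x : R, (∀ n : ℕ, x ^ n ≤ ((P.eval n : ℕ) : R)) → x ≤ 1)
    (f : A → R)
    (hf0 : f 0 = 0) (hf1 : f 1 = 1)
    (hfm : ∀ a b : A, f (a * b) ≤ f a * f b)
    (hfa : ∀ a b : A, f (a + b) ≤ f a + f b)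
    (hpm : ∀ (a : A) (n : ℕ), f (a ^ n) = f a ^ n) :
    ∀ a b : A, f (a + b) ≤ max (f ((2 : ℤ) : A)) 1 * max (f a) (f b) := by
  -- every element of `R` is nonnegative
  have nonneg : ∀ x : R, 0 ≤ x := by
    intro x
    by_contra h
    have hx : x < 0 := lt_of_not_ge h
    have hx0 : x ≠ 0 := ne_of_lt hx
    have h1 : x⁻¹ * x ≤ x⁻¹ * 0 := hmul x⁻¹ x x⁻¹ 0 le_rfl hx.le
    rw [inv_mul_cancel₀ hx0, mul_zero] at h1
    exact hpos.not_ge h1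
  have powle : ∀ x y : R, x ≤ y → ∀ n : ℕ, x ^ n ≤ y ^ n := by
    intro x y hxy n
    induction n with
    | zero => simp
    | succ n ih => rw [pow_succ, pow_succ]; exact hmul _ _ _ _ ih hxy
  have one_le_pow : ∀ (y : R), 1 ≤ y → ∀ n : ℕ, 1 ≤ y ^ n := by
    intro y hy n
    simpa using powle 1 y hy n
  have sumle : ∀ (s : Finset ℕ) (g h : ℕ → R), (∀ i ∈ s, g i ≤ h i) →
      (∑ i ∈ s, g i) ≤ ∑ i ∈ s, h i := by
    intro s g h H
    induction s using Finset.cons_induction with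
    | empty => simp
    | cons i s his ih =>
      rw [Finset.sum_cons, Finset.sum_cons]
      exact hadd _ _ _ _ (H i (Finset.mem_cons_self _ _))
        (ih fun j hj => H j (Finset.mem_cons_of_mem hj))
  have fsum : ∀ (s : Finset ℕ) (g : ℕ → A),
      f (∑ i ∈ s, g i) ≤ ∑ i ∈ s, f (g i) := by
    intro s g
    induction s using Finset.cons_induction with
    | empty => simp [hf0]
    | cons i s his ih =>
      rw [Finset.sum_cons, Finset.sum_cons]
      exact le_trans (hfa _ _) (hadd _ _ _ _ le_rfl ih)
  intro a b
  set M : R := max (f ((2 : ℤ) : A)) 1 with hMdef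
  set N : R := max (f a) (f b) with hNdef
  have hM1 : (1 : R) ≤ M := le_max_right _ _
  have two_eq : ((2 : ℤ) : A) = (2 : A) := by push_cast; ring
  have hf2M : f (2 : A) ≤ M := two_eq ▸ le_max_left _ _
  have h12 : (1 : R) ≤ 1 + 1 := by
    calc (1 : R) = 0 + 1 := by ring
    _ ≤ 1 + 1 := hadd 0 1 1 1 hpos.le le_rfl
  have hM2 : M ≤ 1 + 1 := by
    refine max_le ?_ h12
    rw [two_eq]
    calc f (2 : A) = f (1 + 1) := by norm_num
    _ ≤ f 1 + f 1 := hfa 1 1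
    _ = 1 + 1 := by rw [hf1]
  have haN : f a ≤ N := le_max_left _ _
  have hbN : f b ≤ N := le_max_right _ _
  -- bound on casts of naturals
  have castbound : ∀ n m : ℕ, m < 2 ^ n → f ((m : A)) ≤ (n : R) * M ^ n := by
    intro n
    induction n with
    | zero =>
      intro m hm
      interval_cases m
      simp [hf0]
    | succ n ih =>
      intro m hm
      have hq : m / 2 < 2 ^ n := by
        have := Nat.div_add_mod m 2
        have h2 : (2:ℕ) ^ (n+1) = 2 ^ n * 2 := pow_succ 2 n
        omega
      have hmeq : (m : A) = 2 * ((m / 2 : ℕ) : A) + ((m % 2 : ℕ) : A) := by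
        rw [← Nat.cast_ofNat, ← Nat.cast_mul, ← Nat.cast_add, Nat.div_add_mod]
      have hr : f ((m % 2 : ℕ) : A) ≤ 1 := by
        rcases Nat.mod_two_eq_zero_or_one m with h | h <;> simp [h, hf0, hf1]
        exact hpos.le
      have step1 : f ((m : A)) ≤ f 2 * f ((m / 2 : ℕ) : A) + f ((m % 2 : ℕ) : A) := by
        rw [hmeq]
        exact le_trans (hfa _ _) (hadd _ _ _ _ (hfm _ _) le_rfl)
      have step2 : f 2 * f ((m / 2 : ℕ) : A) ≤ M * ((n : R) * M ^ n) :=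
        hmul _ _ _ _ hf2M (ih _ hq)
      have step3 : f ((m : A)) ≤ M * ((n : R) * M ^ n) + 1 :=
        le_trans step1 (hadd _ _ _ _ step2 hr)
      refine le_trans step3 ?_
      have hMn1 : (1 : R) ≤ M ^ (n + 1) := one_le_pow M hM1 (n + 1)
      have : M * ((n : R) * M ^ n) + 1 ≤ (n : R) * M ^ (n + 1) + M ^ (n + 1) := by
        refine hadd _ _ _ _ (le_of_eq ?_) hMn1
        ring
      refine le_trans this (le_of_eq ?_)
      push_cast
      ring
  -- the key polynomial bound
  have key : ∀ n : ℕ, f (a + b) ^ n ≤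
      ((n : R) + 1) * (N ^ n * (((n : R) + 1) * M ^ (n + 1))) := by
    intro n
    have hbin : f (a + b) ^ n = f ((a + b) ^ n) := (hpm _ _).symm
    rw [hbin, add_pow]
    refine le_trans (fsum _ _) ?_
    have termle : ∀ k ∈ Finset.range (n + 1),
        f (a ^ k * b ^ (n - k) * (n.choose k : A)) ≤
          N ^ n * (((n : R) + 1) * M ^ (n + 1)) := by
      intro k hk
      have hkn : k ≤ n := Nat.lt_succ_iff.mp (Finset.mem_range.mp hk)
      have hc : n.choose k < 2 ^ (n + 1) := by
        have h1 : n.choose k ≤ 2 ^ n := by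
          calc n.choose k ≤ ∑ i ∈ Finset.range (n + 1), n.choose i :=
            Finset.single_le_sum (fun i _ => Nat.zero_le _) hk
          _ = 2 ^ n := Nat.sum_range_choose n
        have h2 : (2:ℕ) ^ (n+1) = 2 ^ n * 2 := pow_succ 2 n
        have h3 : 0 < (2:ℕ) ^ n := Nat.pow_pos (by norm_num)
        omega
      have hcb : f ((n.choose k : ℕ) : A) ≤ ((n : R) + 1) * M ^ (n + 1) := by
        have := castbound (n + 1) (n.choose k) hc
        refine le_trans this (le_of_eq ?_)
        push_cast
        ring
      have h1 : f (a ^ k * b ^ (n - k) * (n.choose k : A)) ≤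
          (f a ^ k * f b ^ (n - k)) * f ((n.choose k : ℕ) : A) := by
        refine le_trans (hfm _ _) (hmul _ _ _ _ ?_ le_rfl)
        refine le_trans (hfm _ _) (le_of_eq ?_)
        rw [hpm, hpm]
      refine le_trans h1 ?_
      have h2 : f a ^ k * f b ^ (n - k) ≤ N ^ n := by
        have := hmul _ _ _ _ (powle _ _ haN k) (powle _ _ hbN (n - k))
        refine le_trans this (le_of_eq ?_)
        rw [← pow_add, Nat.add_sub_cancel' hkn]
      exact hmul _ _ _ _ h2 hcb
    refine le_trans (sumle _ _ _ termle) (le_of_eq ?_)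
    rw [Finset.sum_const, Finset.card_range, nsmul_eq_mul]
    push_cast
    ring
  -- split on whether N is zero
  rcases (nonneg N).eq_or_lt with hN0 | hNpos
  · -- N = 0
    have hfa0 : f a = 0 := le_antisymm (hN0 ▸ haN) (nonneg _)
    have hfb0 : f b = 0 := le_antisymm (hN0 ▸ hbN) (nonneg _)
    calc f (a + b) ≤ f a + f b := hfa a b
    _ = 0 := by rw [hfa0, hfb0, add_zero]
    _ = M * N := by rw [← hN0, mul_zero]
  · -- N > 0
    have hMne : M ≠ 0 := (lt_of_lt_of_le hpos hM1).ne'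
    have hNne : N ≠ 0 := hNpos.ne'
    have hMNne : M * N ≠ 0 := mul_ne_zero hMne hNne
    set x : R := f (a + b) * (M * N)⁻¹ with hxdef
    set P : Polynomial ℕ := 2 * (Polynomial.X + 1) ^ 2 with hPdef
    have hPne : P ≠ 0 := by
      intro h
      have := congrArg (Polynomial.eval 0) h
      simp [hPdef] at this
    have hPeval : ∀ n : ℕ, P.eval n = 2 * (n + 1) ^ 2 := by
      intro n; simp [hPdef]
    have hx : ∀ n : ℕ, x ^ n ≤ ((P.eval n : ℕ) : R) := by
      intro n
      have h1 : x ^ n = f (a + b) ^ n * ((M * N) ^ n)⁻¹ := by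
        rw [hxdef, mul_pow, inv_pow]
      have h2 : x ^ n ≤ ((n : R) + 1) * (N ^ n * (((n : R) + 1) * M ^ (n + 1))) *
          ((M * N) ^ n)⁻¹ := by
        rw [h1]
        exact hmul _ _ _ _ (key n) le_rfl
      have h3 : ((n : R) + 1) * (N ^ n * (((n : R) + 1) * M ^ (n + 1))) *
          ((M * N) ^ n)⁻¹ = ((n : R) + 1) * ((n : R) + 1) * M := by
        field_simp
        ring
      rw [h3] at h2
      refine le_trans h2 ?_
      have h4 : ((n : R) + 1) * ((n : R) + 1) * M ≤
          ((n : R) + 1) * ((n : R) + 1) * (1 + 1) := hmul _ _ _ _ le_rfl hM2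
      refine le_trans h4 (le_of_eq ?_)
      rw [hPeval]
      push_cast
      ring
    have hx1 : x ≤ 1 := htemp P hPne x hx
    have hfin : f (a + b) = x * (M * N) := by
      rw [hxdef, mul_assoc, inv_mul_cancel₀ hMNne, mul_one]
    calc f (a + b) = x * (M * N) := hfin
    _ ≤ 1 * (M * N) := hmul _ _ _ _ hx1 le_rfl
    _ = M * N := one_mul _
end

section
/- Let R be a positive totally ordered aura with tempered growth and |·| : ℤ → R a power-multiplicative seminorm. Then for all natural numbers m, n with m > 1 and n > 1, |m| ≤ max(1, |n|)^c, where c = 1 + ⌊log m / log n⌋ is one more than the largest integer k with n^k ≤ m. -/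
/-- For a tempered power-multiplicative seminorm `|·| : ℤ → R` and naturals
`m, n > 1`, one has `|m| ≤ max(1, |n|) ^ (⌊log m / log n⌋ + 1)`, where
`⌊log m / log n⌋ = Nat.log n m` is the largest `k` with `n ^ k ≤ m`. -/
theorem tempered_powmult_log_bound
    {R : Type*} [Semifield R] [LinearOrder R]
    (hadd : ∀ x y z t : R, x ≤ z → y ≤ t → x + y ≤ z + t)
    (hmul : ∀ x y z t : R, x ≤ z → y ≤ t → x * y ≤ z * t)
    (hpos : (0 : R) < 1)
    (htemp : ∀ P : Polynomial ℕ, P ≠ 0 →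
      ∀ x : R, (∀ n : ℕ, x ^ n ≤ ((P.eval n : ℕ) : R)) → x ≤ 1)
    (f : ℤ → R)
    (hf0 : f 0 = 0) (hf1 : f 1 = 1)
    (hfm : ∀ a b : ℤ, f (a * b) ≤ f a * f b)
    (hfa : ∀ a b : ℤ, f (a + b) ≤ f a + f b)
    (hpm : ∀ (a : ℤ) (k : ℕ), f (a ^ k) = f a ^ k) :
    ∀ m n : ℕ, 1 < m → 1 < n →
      f (m : ℤ) ≤ max 1 (f (n : ℤ)) ^ (Nat.log n m + 1) := by
  intro m n hm hn
  -- basic order facts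
  have h01 : (0 : R) ≤ 1 := hpos.le
  have cast_add_le : ∀ a b : ℕ, ((a : ℕ) : R) ≤ ((a + b : ℕ) : R) := by
    intro a b
    induction b with
    | zero => simp
    | succ b ih =>
      have h := hadd ((a : R) + b) 0 ((a : R) + b) 1 le_rfl h01
      rw [add_zero] at h
      push_cast at ih ⊢
      calc (a : R) ≤ (a : R) + b := ih
      _ ≤ (a : R) + b + 1 := h
      _ = (a : R) + (b + 1) := by ring
  have cast_mono : ∀ a b : ℕ, a ≤ b → ((a : ℕ) : R) ≤ ((b : ℕ) : R) := by
    intro a b hab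
    obtain ⟨c, rfl⟩ := Nat.exists_eq_add_of_le hab
    exact cast_add_le a c
  have fnat : ∀ k : ℕ, f (k : ℤ) ≤ (k : R) := by
    intro k
    induction k with
    | zero => simp [hf0]
    | succ k ih =>
      have h1 : f ((k : ℤ) + 1) ≤ f k + f 1 := hfa _ _
      push_cast
      calc f ((k : ℤ) + 1) ≤ f k + f 1 := h1
      _ ≤ (k : R) + 1 := hadd _ _ _ _ ih (le_of_eq hf1)
  set M : R := max 1 (f (n : ℤ)) with hM
  have hM1 : (1 : R) ≤ M := le_max_left _ _
  have one_le_pow : ∀ k : ℕ, (1 : R) ≤ M ^ k := by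
    intro k
    induction k with
    | zero => simp
    | succ k ih =>
      calc (1 : R) = 1 * 1 := (one_mul 1).symm
      _ ≤ M ^ k * M := hmul _ _ _ _ ih hM1
      _ = M ^ (k + 1) := (pow_succ M k).symm
  have pow_mono : ∀ i j : ℕ, i ≤ j → M ^ i ≤ M ^ j := by
    intro i j hij
    obtain ⟨c, rfl⟩ := Nat.exists_eq_add_of_le hij
    calc M ^ i = M ^ i * 1 := (mul_one _).symm
    _ ≤ M ^ i * M ^ c := hmul _ _ _ _ le_rfl (one_le_pow c)
    _ = M ^ (i + c) := (pow_add M i c).symm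
  have hn0 : 0 < n := by omega
  -- key bound: f m ≤ n * (log n m + 1) * M ^ (log n m)
  have key : ∀ m : ℕ,
      f (m : ℤ) ≤ (n : R) * ((Nat.log n m + 1 : ℕ) : R) * M ^ (Nat.log n m) := by
    intro m
    induction m using Nat.strong_induction_on with
    | _ m ih =>
      by_cases hsmall : m < n
      · have hlog : Nat.log n m = 0 := Nat.log_eq_zero_iff.mpr (Or.inl hsmall)
        rw [hlog]
        have : f (m : ℤ) ≤ (n : R) := (fnat m).trans (cast_mono m n hsmall.le)
        calc f (m : ℤ) ≤ (n : R) := this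
        _ = (n : R) * ((0 + 1 : ℕ) : R) * M ^ 0 := by push_cast; ring
      · push_neg at hsmall
        have hm1 : 0 < m := by omega
        set q := m / n with hq
        set r := m % n with hr
        have hqlt : q < m := Nat.div_lt_self hm1 hn
        have hrlt : r < n := Nat.mod_lt m hn0
        have hLq : Nat.log n m = Nat.log n q + 1 := by
          have h1 : Nat.log n q = Nat.log n m - 1 := Nat.log_div_base n m
          have h2 : 0 < Nat.log n m := Nat.log_pos hn hsmall
          omega
        set L := Nat.log n q with hLdef
        have hdecomp : (m : ℤ) = (n : ℤ) * q + r := by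
          exact_mod_cast (Nat.div_add_mod m n).symm
        have step1 : f (m : ℤ) ≤ f ((n : ℤ) * q) + f (r : ℤ) := by
          rw [hdecomp]; exact hfa _ _
        have step2 : f ((n : ℤ) * q) ≤ f (n : ℤ) * f (q : ℤ) := hfm _ _
        have step3 : f (n : ℤ) * f (q : ℤ) ≤
            M * ((n : R) * ((L + 1 : ℕ) : R) * M ^ L) :=
          hmul _ _ _ _ (le_max_right _ _) (ih q hqlt)
        have step4 : f (r : ℤ) ≤ (n : R) :=
          (fnat r).trans (cast_mono r n hrlt.le)
        have step5 : f (m : ℤ) ≤ M * ((n : R) * ((L + 1 : ℕ) : R) * M ^ L) + (n : R) :=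
          step1.trans (hadd _ _ _ _ (step2.trans step3) step4)
        have e1 : M * ((n : R) * ((L + 1 : ℕ) : R) * M ^ L) =
            (n : R) * ((L + 1 : ℕ) : R) * M ^ (L + 1) := by
          push_cast; ring
        have e2 : (n : R) * ((L + 1 + 1 : ℕ) : R) * M ^ (L + 1) =
            (n : R) * ((L + 1 : ℕ) : R) * M ^ (L + 1) + (n : R) * M ^ (L + 1) := by
          push_cast; ring
        have e3 : (n : R) ≤ (n : R) * M ^ (L + 1) := by
          calc (n : R) = (n : R) * 1 := (mul_one _).symm
          _ ≤ (n : R) * M ^ (L + 1) := hmul _ _ _ _ le_rfl (one_le_pow _)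
        rw [hLq]
        calc f (m : ℤ) ≤ (n : R) * ((L + 1 : ℕ) : R) * M ^ (L + 1) + (n : R) := by
              rw [← e1]; exact step5
        _ ≤ (n : R) * ((L + 1 : ℕ) : R) * M ^ (L + 1) + (n : R) * M ^ (L + 1) :=
              hadd _ _ _ _ le_rfl e3
        _ = (n : R) * ((L + 1 + 1 : ℕ) : R) * M ^ (L + 1) := e2.symm
  -- now apply tempered growth
  set L := Nat.log n m with hL
  set y : R := M ^ (L + 1) with hy
  have hyne : y ≠ 0 := by
    intro h
    have : (1 : R) ≤ 0 := h ▸ one_le_pow (L + 1)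
    exact absurd (this.trans_lt hpos) (lt_irrefl 1)
  set x : R := f (m : ℤ) * y⁻¹ with hx
  set P : Polynomial ℕ := Polynomial.C n * (Polynomial.C (L + 1) * Polynomial.X + 1) with hP
  have hPeval : ∀ k : ℕ, P.eval k = n * ((L + 1) * k + 1) := by
    intro k; simp [hP]
  have hPne : P ≠ 0 := by
    intro h
    have := congrArg (Polynomial.eval 0) h
    rw [hPeval 0] at this
    simp at this
    omega
  have hm0 : 0 < m := by omega
  have hxk : ∀ k : ℕ, x ^ k ≤ ((P.eval k : ℕ) : R) := by
    intro k
    have hmk0 : m ^ k ≠ 0 := by positivity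
    -- log n (m^k) ≤ (L+1)*k
    have hlogk : Nat.log n (m ^ k) ≤ (L + 1) * k := by
      have h1 : m ≤ n ^ (L + 1) := (Nat.lt_pow_succ_log_self hn m).le
      have h2 : m ^ k ≤ (n ^ (L + 1)) ^ k := Nat.pow_le_pow_left h1 k
      have h3 : Nat.log n (m ^ k) ≤ Nat.log n ((n ^ (L + 1)) ^ k) :=
        Nat.log_mono_right h2
      rwa [← pow_mul, Nat.log_pow hn] at h3
    have hfk : f (m : ℤ) ^ k ≤
        (n : R) * (((L + 1) * k + 1 : ℕ) : R) * M ^ ((L + 1) * k) := by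
      have h1 : f (m : ℤ) ^ k = f ((m ^ k : ℕ) : ℤ) := by
        push_cast
        rw [hpm]
      rw [h1]
      refine (key (m ^ k)).trans ?_
      have h2 : ((Nat.log n (m ^ k) + 1 : ℕ) : R) ≤ (((L + 1) * k + 1 : ℕ) : R) :=
        cast_mono _ _ (by omega)
      have h3 : M ^ (Nat.log n (m ^ k)) ≤ M ^ ((L + 1) * k) :=
        pow_mono _ _ hlogk
      exact hmul _ _ _ _ (hmul _ _ _ _ le_rfl h2) h3
    have hykeq : M ^ ((L + 1) * k) = y ^ k := by
      rw [hy, ← pow_mul]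
    have hykne : y ^ k ≠ 0 := pow_ne_zero k hyne
    have hxkeq : x ^ k = f (m : ℤ) ^ k * (y ^ k)⁻¹ := by
      rw [hx, mul_pow, inv_pow]
    rw [hxkeq, hPeval k]
    calc f (m : ℤ) ^ k * (y ^ k)⁻¹
        ≤ (n : R) * (((L + 1) * k + 1 : ℕ) : R) * y ^ k * (y ^ k)⁻¹ := by
          refine hmul _ _ _ _ ?_ le_rfl
          rw [← hykeq]; exact hfk
    _ = (n : R) * (((L + 1) * k + 1 : ℕ) : R) := by
          rw [mul_assoc, mul_inv_cancel₀ hykne, mul_one]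
    _ = ((n * ((L + 1) * k + 1) : ℕ) : R) := by push_cast; ring
  have hx1 : x ≤ 1 := htemp P hPne x hxk
  have hfin : f (m : ℤ) = x * y := by
    rw [hx, mul_assoc, inv_mul_cancel₀ hyne, mul_one]
  calc f (m : ℤ) = x * y := hfin
  _ ≤ 1 * y := hmul _ _ _ _ hx1 le_rfl
  _ = y := one_mul y
end

section
/- Let A be a commutative ring, R a positive totally ordered aura with tempered growth, and |·| : A → R a power-multiplicative seminorm such that |2| ≤ 1 (where 2 denotes the image of 2 ∈ ℤ in A). Then |n| ≤ 1 for every n ∈ ℕ (image of n in A), and |·| is non-archimedean: |a + b| ≤ max(|a|, |b|) for all a, b ∈ A. -/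
/-- A tempered power-multiplicative seminorm with `|2| ≤ 1` satisfies `|n| ≤ 1` for all
`n : ℕ` and is non-archimedean. -/
theorem tempered_powmult_two_le_one_nonarchimedean {A : Type*} [CommRing A]
    {R : Type*} [Semifield R] [LinearOrder R]
    (hadd : ∀ x y z t : R, x ≤ z → y ≤ t → x + y ≤ z + t)
    (hmul : ∀ x y z t : R, x ≤ z → y ≤ t → x * y ≤ z * t)
    (hpos : (0 : R) < 1)
    (htemp : ∀ P : Polynomial ℕ, P ≠ 0 →
      ∀ x : R, (∀ n : ℕ, x ^ n ≤ ((P.eval n : ℕ) : R)) → x ≤ 1)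
    (f : A → R)
    (hf0 : f 0 = 0) (hf1 : f 1 = 1)
    (hfm : ∀ a b : A, f (a * b) ≤ f a * f b)
    (hfa : ∀ a b : A, f (a + b) ≤ f a + f b)
    (hpm : ∀ (a : A) (n : ℕ), f (a ^ n) = f a ^ n)
    (h2 : f ((2 : ℤ) : A) ≤ 1) :
    (∀ n : ℕ, f ((n : ℕ) : A) ≤ 1) ∧ ∀ a b : A, f (a + b) ≤ max (f a) (f b) := by
  have h01 : (0 : R) ≤ 1 := le_of_lt hpos
  -- monotonicity of the natural cast
  have hcast : ∀ m k : ℕ, m ≤ k → ((m : ℕ) : R) ≤ ((k : ℕ) : R) := by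
    have step : ∀ m j : ℕ, ((m : ℕ) : R) ≤ ((m + j : ℕ) : R) := by
      intro m j
      induction j with
      | zero => simp
      | succ j ih =>
        calc ((m : ℕ) : R) ≤ ((m + j : ℕ) : R) := ih
          _ = ((m + j : ℕ) : R) + 0 := by rw [add_zero]
          _ ≤ ((m + j : ℕ) : R) + 1 := hadd _ _ _ _ le_rfl h01
          _ = ((m + (j + 1) : ℕ) : R) := by push_cast; ring
    intro m k hmk
    obtain ⟨j, rfl⟩ := Nat.exists_eq_add_of_le hmk
    exact step m j
  -- powers are monotone
  have hpow : ∀ x y : R, x ≤ y → ∀ i : ℕ, x ^ i ≤ y ^ i := by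
    intro x y hxy i
    induction i with
    | zero => simp
    | succ i ih =>
      rw [pow_succ, pow_succ]
      exact hmul _ _ _ _ ih hxy
  have f2 : f ((2 : ℕ) : A) ≤ 1 := by
    have : ((2 : ℤ) : A) = ((2 : ℕ) : A) := by push_cast; ring
    rwa [this] at h2
  -- binary digit bound
  have claim : ∀ k : ℕ, ∀ m : ℕ, m < 2 ^ k → f ((m : ℕ) : A) ≤ ((k : ℕ) : R) := by
    intro k
    induction k with
    | zero =>
      intro m hm
      interval_cases m
      simpa using hf0.le
    | succ k ih =>
      intro m hm
      have hq : m / 2 < 2 ^ k := by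
        rw [Nat.div_lt_iff_lt_mul (by norm_num)]
        calc m < 2 ^ (k + 1) := hm
          _ = 2 ^ k * 2 := by rw [pow_succ]
      have hrep : ((m : ℕ) : A) = ((2 : ℕ) : A) * ((m / 2 : ℕ) : A) + ((m % 2 : ℕ) : A) := by
        conv_lhs => rw [← Nat.div_add_mod m 2]
        push_cast
        ring
      have hr : f ((m % 2 : ℕ) : A) ≤ 1 := by
        rcases Nat.mod_two_eq_zero_or_one m with h | h <;> rw [h]
        · simpa using hf0.le.trans h01
        · simpa using hf1.le
      calc f ((m : ℕ) : A) = f (((2 : ℕ) : A) * ((m / 2 : ℕ) : A) + ((m % 2 : ℕ) : A)) := by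
            rw [hrep]
        _ ≤ f (((2 : ℕ) : A) * ((m / 2 : ℕ) : A)) + f ((m % 2 : ℕ) : A) := hfa _ _
        _ ≤ f ((2 : ℕ) : A) * f ((m / 2 : ℕ) : A) + f ((m % 2 : ℕ) : A) :=
            hadd _ _ _ _ (hfm _ _) le_rfl
        _ ≤ 1 * ((k : ℕ) : R) + 1 := hadd _ _ _ _ (hmul _ _ _ _ f2 (ih _ hq)) hr
        _ = ((k : ℕ) : R) + 1 := by rw [one_mul]
        _ = (((k + 1 : ℕ)) : R) := by push_cast; ring
  -- Part 1
  have part1 : ∀ n : ℕ, f ((n : ℕ) : A) ≤ 1 := by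
    intro n
    rcases Nat.eq_zero_or_pos n with rfl | hn
    · simpa using hf0.le.trans h01
    set s := Nat.size n with hs
    have hP : (Polynomial.C s * Polynomial.X + Polynomial.C 1 : Polynomial ℕ) ≠ 0 := by
      intro h
      have := congrArg (Polynomial.eval 0) h
      simp at this
    apply htemp _ hP
    intro k
    have heval : ((Polynomial.C s * Polynomial.X + Polynomial.C 1 : Polynomial ℕ).eval k)
        = s * k + 1 := by simp
    rw [heval]
    cases k with
    | zero => simp
    | succ k =>
      have hpowcast : ((n : ℕ) : A) ^ (k + 1) = ((n ^ (k + 1) : ℕ) : A) := by push_cast; ring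
      have hbound : n ^ (k + 1) < 2 ^ (s * (k + 1)) := by
        calc n ^ (k + 1) < (2 ^ s) ^ (k + 1) :=
              Nat.pow_lt_pow_left (Nat.lt_size_self n) (Nat.succ_ne_zero k)
          _ = 2 ^ (s * (k + 1)) := by rw [← pow_mul]
      calc f ((n : ℕ) : A) ^ (k + 1) = f (((n : ℕ) : A) ^ (k + 1)) := (hpm _ _).symm
        _ = f ((n ^ (k + 1) : ℕ) : A) := by rw [hpowcast]
        _ ≤ ((s * (k + 1) : ℕ) : R) := claim _ _ hbound
        _ ≤ ((s * (k + 1) + 1 : ℕ) : R) := hcast _ _ (Nat.le_succ _)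
  refine ⟨part1, ?_⟩
  -- sum bound
  have hsum : ∀ (N : ℕ) (g : ℕ → A) (c : R), (∀ i, i < N → f (g i) ≤ c) →
      f (∑ i ∈ Finset.range N, g i) ≤ ((N : ℕ) : R) * c := by
    intro N g c hg
    induction N with
    | zero => simp [hf0]
    | succ N ih =>
      rw [Finset.sum_range_succ]
      calc f ((∑ i ∈ Finset.range N, g i) + g N)
          ≤ f (∑ i ∈ Finset.range N, g i) + f (g N) := hfa _ _
        _ ≤ ((N : ℕ) : R) * c + c :=
            hadd _ _ _ _ (ih fun i hi => hg i (hi.trans (Nat.lt_succ_self N))) (hg N (Nat.lt_succ_self N))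
        _ = (((N + 1 : ℕ)) : R) * c := by push_cast; ring
  intro a b
  set M := max (f a) (f b) with hM
  by_cases hM0 : M = 0
  · have ha : f a ≤ 0 := hM0 ▸ le_max_left _ _
    have hb : f b ≤ 0 := hM0 ▸ le_max_right _ _
    calc f (a + b) ≤ f a + f b := hfa _ _
      _ ≤ 0 + 0 := hadd _ _ _ _ ha hb
      _ = M := by rw [add_zero, hM0]
  · have hterm : ∀ n : ℕ, ∀ i, i < n + 1 →
        f (a ^ i * b ^ (n - i) * (n.choose i : A)) ≤ M ^ n := by
      intro n i hi
      have hin : i ≤ n := Nat.lt_succ_iff.mp hi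
      calc f (a ^ i * b ^ (n - i) * (n.choose i : A))
          ≤ f (a ^ i * b ^ (n - i)) * f ((n.choose i : ℕ) : A) := hfm _ _
        _ ≤ f (a ^ i) * f (b ^ (n - i)) * f ((n.choose i : ℕ) : A) :=
            hmul _ _ _ _ (hfm _ _) le_rfl
        _ = f a ^ i * f b ^ (n - i) * f ((n.choose i : ℕ) : A) := by rw [hpm, hpm]
        _ ≤ M ^ i * M ^ (n - i) * 1 :=
            hmul _ _ _ _ (hmul _ _ _ _ (hpow _ _ (le_max_left _ _) i)
              (hpow _ _ (le_max_right _ _) (n - i))) (part1 _)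
        _ = M ^ n := by rw [mul_one, ← pow_add, Nat.add_sub_cancel' hin]
    have key : ∀ n : ℕ, (f (a + b) * M⁻¹) ^ n ≤ ((n + 1 : ℕ) : R) := by
      intro n
      have hb1 : f ((a + b) ^ n) ≤ ((n + 1 : ℕ) : R) * M ^ n := by
        rw [add_pow]
        exact hsum (n + 1) _ (M ^ n) (hterm n)
      calc (f (a + b) * M⁻¹) ^ n = f ((a + b) ^ n) * (M⁻¹) ^ n := by
            rw [mul_pow, hpm]
        _ ≤ ((n + 1 : ℕ) : R) * M ^ n * (M⁻¹) ^ n := hmul _ _ _ _ hb1 le_rfl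
        _ = ((n + 1 : ℕ) : R) * (M * M⁻¹) ^ n := by rw [mul_pow, mul_assoc]
        _ = ((n + 1 : ℕ) : R) := by rw [mul_inv_cancel₀ hM0, one_pow, mul_one]
    have hP : (Polynomial.X + Polynomial.C 1 : Polynomial ℕ) ≠ 0 := by
      intro h
      have := congrArg (Polynomial.eval 0) h
      simp at this
    have hle : f (a + b) * M⁻¹ ≤ 1 := by
      apply htemp _ hP
      intro n
      have heval : ((Polynomial.X + Polynomial.C 1 : Polynomial ℕ).eval n) = n + 1 := by simp
      rw [heval]
      exact key n
    calc f (a + b) = f (a + b) * M⁻¹ * M := by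
          rw [mul_assoc, inv_mul_cancel₀ hM0, mul_one]
      _ ≤ 1 * M := hmul _ _ _ _ hle le_rfl
      _ = M := one_mul M
end

section
/- Let A be a commutative ring, R a positive totally ordered aura with tempered growth, and |·| : A → R a power-multiplicative seminorm such that |2| > 1 (where 2 denotes the image of 2 ∈ ℤ in A). Then the restriction of |·| to the image of ℤ in A is multiplicative and is multiplicatively equivalent to the archimedean absolute value on ℤ: for all m, n ∈ ℤ (viewed in A via the canonical map), |m·n| = |m|·|n|, and |m| ≤ |n| if and only if the usual absolute value of m in ℤ is at most that of n. -/
set_option linter.unusedSectionVars false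

section TemperedProof

variable {A : Type*} [CommRing A] {R : Type*} [Semifield R] [LinearOrder R]

private def gx (f : A → R) (n : ℕ) : R := f (n : A)

private lemma aux_nonneg
    (hmul : ∀ x y z t : R, x ≤ z → y ≤ t → x * y ≤ z * t)
    (hpos : (0 : R) < 1) (x : R) : 0 ≤ x := by
  by_contra hx
  push_neg at hx
  have hx0 : x ≠ 0 := ne_of_lt hx
  rcases le_or_gt x⁻¹ 0 with h | h
  · have h1 := hmul x x⁻¹ 0 0 hx.le h
    rw [mul_inv_cancel₀ hx0, mul_zero] at h1
    exact hpos.not_ge h1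
  · have h1 := hmul x x⁻¹ 0 x⁻¹ hx.le le_rfl
    rw [mul_inv_cancel₀ hx0, zero_mul] at h1
    exact hpos.not_ge h1

private lemma aux_pow_mono
    (hmul : ∀ x y z t : R, x ≤ z → y ≤ t → x * y ≤ z * t)
    {x y : R} (h : x ≤ y) (n : ℕ) : x ^ n ≤ y ^ n := by
  induction n with
  | zero => simp
  | succ k ih => rw [pow_succ, pow_succ]; exact hmul _ _ _ _ ih h

private lemma aux_le_add
    (hadd : ∀ x y z t : R, x ≤ z → y ≤ t → x + y ≤ z + t)
    (hmul : ∀ x y z t : R, x ≤ z → y ≤ t → x * y ≤ z * t)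
    (hpos : (0 : R) < 1) (x y : R) : x ≤ x + y := by
  have h := hadd x 0 x y le_rfl (aux_nonneg hmul hpos y)
  rwa [add_zero] at h

private lemma aux_cast_mono
    (hadd : ∀ x y z t : R, x ≤ z → y ≤ t → x + y ≤ z + t)
    (hmul : ∀ x y z t : R, x ≤ z → y ≤ t → x * y ≤ z * t)
    (hpos : (0 : R) < 1) {m n : ℕ} (h : m ≤ n) : (m : R) ≤ (n : R) := by
  have he : (n : R) = (m : R) + ((n - m : ℕ) : R) := by
    rw [← Nat.cast_add]; congr 1; omega
  rw [he]; exact aux_le_add hadd hmul hpos _ _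

private lemma aux_le_mul
    (hmul : ∀ x y z t : R, x ≤ z → y ≤ t → x * y ≤ z * t)
    {x z : R} (hz : 1 ≤ z) : x ≤ x * z := by
  have h := hmul x 1 x z le_rfl hz
  rwa [mul_one] at h

private lemma aux_one_le_pow
    (hmul : ∀ x y z t : R, x ≤ z → y ≤ t → x * y ≤ z * t)
    {z : R} (hz : 1 ≤ z) (n : ℕ) : 1 ≤ z ^ n := by
  have h := aux_pow_mono hmul hz n
  rwa [one_pow] at h

private lemma aux_pow_le_pow
    (hmul : ∀ x y z t : R, x ≤ z → y ≤ t → x * y ≤ z * t)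
    {z : R} (hz : 1 ≤ z) {m n : ℕ} (h : m ≤ n) : z ^ m ≤ z ^ n := by
  have he : z ^ n = z ^ m * z ^ (n - m) := by rw [← pow_add]; congr 1; omega
  rw [he]
  exact aux_le_mul hmul (aux_one_le_pow hmul hz _)

private lemma aux_div
    (hmul : ∀ x y z t : R, x ≤ z → y ≤ t → x * y ≤ z * t)
    (htemp : ∀ P : Polynomial ℕ, P ≠ 0 →
      ∀ x : R, (∀ n : ℕ, x ^ n ≤ ((P.eval n : ℕ) : R)) → x ≤ 1)
    {x y : R} (hy : y ≠ 0) (P : Polynomial ℕ) (hP : P ≠ 0)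
    (h : ∀ n : ℕ, x ^ n ≤ ((P.eval n : ℕ) : R) * y ^ n) : x ≤ y := by
  have key : ∀ n : ℕ, (x * y⁻¹) ^ n ≤ ((P.eval n : ℕ) : R) := by
    intro n
    have h1 := hmul (x ^ n) ((y ^ n)⁻¹) (((P.eval n : ℕ) : R) * y ^ n) ((y ^ n)⁻¹) (h n) le_rfl
    rw [mul_assoc, mul_inv_cancel₀ (pow_ne_zero _ hy), mul_one] at h1
    calc (x * y⁻¹) ^ n = x ^ n * (y ^ n)⁻¹ := by rw [mul_pow, inv_pow]
    _ ≤ _ := h1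
  have h1 := htemp P hP _ key
  have h2 := hmul (x * y⁻¹) y 1 y h1 le_rfl
  rwa [inv_mul_cancel_right₀ hy, one_mul] at h2

private lemma aux_cancel
    (hmul : ∀ x y z t : R, x ≤ z → y ≤ t → x * y ≤ z * t)
    {c t : R} (hc : 1 < c) (ht : t ≠ 0) (h : c * t ≤ t) : False := by
  have h1 := hmul (c * t) t⁻¹ t t⁻¹ h le_rfl
  rw [mul_inv_cancel_right₀ ht, mul_inv_cancel₀ ht] at h1
  exact hc.not_ge h1

end TemperedProof
private lemma nat_pow_gap {u v : ℕ} (hu : 1 ≤ u) (huv : u < v) : ∃ k, 2 * u ^ k ≤ v ^ k := by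
  refine ⟨u, ?_⟩
  have hu0 : (0:ℝ) < (u:ℝ) := by exact_mod_cast hu
  have h1 : (1:ℝ) + (u : ℕ) * (1/(u:ℝ)) ≤ (1 + 1/(u:ℝ)) ^ u :=
    one_add_mul_le_pow (le_trans (by norm_num : (-2:ℝ) ≤ 0) (by positivity)) u
  have h2 : (1:ℝ) + (u:ℝ) * (1/(u:ℝ)) = 2 := by
    rw [mul_one_div, div_self (ne_of_gt hu0)]
    norm_num
  have hv' : ((u:ℝ) + 1) ≤ (v:ℝ) := by exact_mod_cast huv
  have h3 : (1:ℝ) + 1/(u:ℝ) ≤ (v:ℝ)/(u:ℝ) := by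
    rw [show (1:ℝ) + 1/(u:ℝ) = ((u:ℝ)+1)/(u:ℝ) by field_simp]
    gcongr
  have h4 : ((1:ℝ) + 1/(u:ℝ)) ^ u ≤ ((v:ℝ)/(u:ℝ)) ^ u :=
    pow_le_pow_left₀ (by positivity) h3 u
  have h5 : (2:ℝ) ≤ ((v:ℝ)/(u:ℝ)) ^ u := by
    calc (2:ℝ) = 1 + (u:ℝ) * (1/(u:ℝ)) := h2.symm
    _ ≤ (1 + 1/(u:ℝ)) ^ u := h1
    _ ≤ _ := h4
  have h6 : (2:ℝ) * (u:ℝ) ^ u ≤ (v:ℝ) ^ u := by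
    rw [div_pow] at h5
    have h7 := (le_div_iff₀ (by positivity : (0:ℝ) < (u:ℝ)^u)).mp h5
    linarith
  exact_mod_cast h6

section TemperedMain

set_option linter.unusedSectionVars false

variable {A : Type*} [CommRing A] {R : Type*} [Semifield R] [LinearOrder R]
variable (hadd : ∀ x y z t : R, x ≤ z → y ≤ t → x + y ≤ z + t)
variable (hmul : ∀ x y z t : R, x ≤ z → y ≤ t → x * y ≤ z * t)
variable (hpos : (0 : R) < 1)
variable (htemp : ∀ P : Polynomial ℕ, P ≠ 0 →
      ∀ x : R, (∀ n : ℕ, x ^ n ≤ ((P.eval n : ℕ) : R)) → x ≤ 1)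
variable (f : A → R)
variable (hf0 : f 0 = 0) (hf1 : f 1 = 1)
variable (hfm : ∀ a b : A, f (a * b) ≤ f a * f b)
variable (hfa : ∀ a b : A, f (a + b) ≤ f a + f b)
variable (hpm : ∀ (a : A) (n : ℕ), f (a ^ n) = f a ^ n)
variable (h2 : 1 < f ((2 : ℤ) : A))

include hadd hmul hpos htemp hf0 hf1 hfm hfa hpm h2

private lemma aux_fneg (a : A) : f (-a) = f a := by
  have hsq : f (-1 : A) * f (-1 : A) = 1 := by
    have h := hpm (-1 : A) 2
    rw [show ((-1 : A) ^ 2) = 1 by ring, hf1, sq] at h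
    exact h.symm
  have ht : f (-1 : A) = 1 := by
    set t := f (-1 : A) with hts
    rcases le_or_gt t 1 with h | h
    · have h1 : t * t ≤ t * 1 := hmul t t t 1 le_rfl h
      rw [mul_one, hsq] at h1
      exact le_antisymm h h1
    · exfalso
      have h1 : t * 1 ≤ t * t := hmul t 1 t t le_rfl h.le
      rw [mul_one, hsq] at h1
      exact h.not_ge h1
  apply le_antisymm
  · calc f (-a) = f ((-1) * a) := by rw [neg_one_mul]
    _ ≤ f (-1 : A) * f a := hfm _ _
    _ = f a := by rw [ht, one_mul]
  · calc f a = f ((-1) * (-a)) := by rw [neg_one_mul, neg_neg]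
    _ ≤ f (-1 : A) * f (-a) := hfm _ _
    _ = f (-a) := by rw [ht, one_mul]

private lemma gx_zero : gx f 0 = 0 := by simp [gx, hf0]

private lemma gx_one : gx f 1 = 1 := by simp [gx, hf1]

private lemma gx_add (a b : ℕ) : gx f (a + b) ≤ gx f a + gx f b := by
  unfold gx; rw [Nat.cast_add]; exact hfa _ _

private lemma gx_mul (a b : ℕ) : gx f (a * b) ≤ gx f a * gx f b := by
  unfold gx; rw [Nat.cast_mul]; exact hfm _ _

private lemma gx_pow (a k : ℕ) : gx f (a ^ k) = gx f a ^ k := by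
  unfold gx; rw [Nat.cast_pow]; exact hpm _ _

private lemma gx_cast (n : ℕ) : gx f n ≤ (n : R) := by
  induction n with
  | zero => simp [gx, hf0]
  | succ k ih =>
      have h1 : gx f (k + 1) ≤ gx f k + gx f 1 := gx_add hadd hmul hpos htemp f hf0 hf1 hfm hfa hpm h2 k 1
      rw [gx_one hadd hmul hpos htemp f hf0 hf1 hfm hfa hpm h2] at h1
      refine h1.trans ?_
      rw [Nat.cast_add, Nat.cast_one]
      exact hadd _ _ _ _ ih le_rfl

private lemma gx_le_of_sub (a b : ℕ) (h : b ≤ a) :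
    gx f b ≤ gx f a + gx f (a - b) := by
  have he : ((b : ℕ) : A) = (a : A) - ((a - b : ℕ) : A) := by
    rw [Nat.cast_sub h]; ring
  unfold gx
  rw [he, sub_eq_add_neg]
  refine (hfa _ _).trans ?_
  rw [aux_fneg hadd hmul hpos htemp f hf0 hf1 hfm hfa hpm h2]

private lemma gx_two : 1 < gx f 2 := by
  have he : ((2 : ℤ) : A) = ((2 : ℕ) : A) := by push_cast; ring
  unfold gx
  rw [← he]
  exact h2

private lemma aux_GB (v : ℕ) (z : R) (hz : 1 ≤ z) (hvz : gx f v ≤ z) :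
    ∀ k r : ℕ, r < v ^ k → gx f r ≤ ((k * v : ℕ) : R) * z ^ k := by
  intro k
  induction k with
  | zero =>
      intro r hr
      have hr0 : r = 0 := by simpa using hr
      subst hr0
      rw [gx_zero hadd hmul hpos htemp f hf0 hf1 hfm hfa hpm h2]
      exact aux_nonneg hmul hpos _
  | succ k ih =>
      intro r hr
      rcases Nat.eq_zero_or_pos v with hv0 | hvpos
      · subst hv0; simp at hr
      have hvk : 0 < v ^ k := pow_pos hvpos k
      have hr' : r % v ^ k < v ^ k := Nat.mod_lt _ hvk
      have ha : r / v ^ k < v := by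
        apply (Nat.div_lt_iff_lt_mul hvk).mpr
        calc r < v ^ (k+1) := hr
        _ = v * v ^ k := by ring
      have hdec : r = (r / v ^ k) * v ^ k + r % v ^ k := by
        rw [mul_comm]; exact (Nat.div_add_mod r _).symm
      have h1 : gx f r ≤ gx f ((r / v ^ k) * v ^ k) + gx f (r % v ^ k) := by
        conv_lhs => rw [hdec]
        exact gx_add hadd hmul hpos htemp f hf0 hf1 hfm hfa hpm h2 _ _
      have h2' : gx f ((r / v ^ k) * v ^ k) ≤ (v : R) * z ^ k := by
        refine (gx_mul hadd hmul hpos htemp f hf0 hf1 hfm hfa hpm h2 _ _).trans ?_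
        rw [gx_pow hadd hmul hpos htemp f hf0 hf1 hfm hfa hpm h2]
        exact hmul _ _ _ _ ((gx_cast hadd hmul hpos htemp f hf0 hf1 hfm hfa hpm h2 _).trans (aux_cast_mono hadd hmul hpos ha.le))
          (aux_pow_mono hmul hvz k)
      have h3 : gx f (r % v ^ k) ≤ ((k * v : ℕ) : R) * z ^ k := ih _ hr'
      have hzk : z ^ k ≤ z ^ (k+1) := aux_pow_le_pow hmul hz (Nat.le_succ k)
      have h4 : (v : R) * z ^ k ≤ (v : R) * z ^ (k+1) := hmul _ _ _ _ le_rfl hzk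
      have h5 : ((k * v : ℕ) : R) * z ^ k ≤ ((k * v : ℕ) : R) * z ^ (k+1) :=
        hmul _ _ _ _ le_rfl hzk
      have h6 := hadd _ _ _ _ (h2'.trans h4) (h3.trans h5)
      refine h1.trans (h6.trans ?_)
      have he : (((k+1) * v : ℕ) : R) = (v : R) + ((k * v : ℕ) : R) := by push_cast; ring
      rw [he, add_mul]

private lemma aux_UB (s : ℕ) : ∀ v : ℕ, v < 2 ^ s → gx f v ≤ (s : R) * gx f 2 ^ s := by
  induction s with
  | zero =>
      intro v hv
      have hv0 : v = 0 := by simpa using hv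
      subst hv0
      rw [gx_zero hadd hmul hpos htemp f hf0 hf1 hfm hfa hpm h2, Nat.cast_zero, zero_mul]
  | succ s ih =>
      intro v hv
      have hc1 : 1 ≤ gx f 2 := (gx_two hadd hmul hpos htemp f hf0 hf1 hfm hfa hpm h2).le
      rcases lt_or_ge v (2 ^ s) with h | h
      · refine (ih v h).trans ?_
        have hcast : ((s : ℕ) : R) ≤ (((s+1) : ℕ) : R) := aux_cast_mono hadd hmul hpos (Nat.le_succ s)
        push_cast at hcast ⊢
        exact hmul _ _ _ _ hcast (aux_pow_le_pow hmul hc1 (Nat.le_succ s))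
      · have hrlt : v - 2 ^ s < 2 ^ s := by
          have h2s : (2:ℕ) ^ (s+1) = 2 ^ s + 2 ^ s := by ring
          omega
        have hdec : v = 2 ^ s + (v - 2 ^ s) := by omega
        have h1 : gx f v ≤ gx f (2 ^ s) + gx f (v - 2 ^ s) := by
          conv_lhs => rw [hdec]
          exact gx_add hadd hmul hpos htemp f hf0 hf1 hfm hfa hpm h2 _ _
        refine h1.trans ?_
        rw [gx_pow hadd hmul hpos htemp f hf0 hf1 hfm hfa hpm h2]
        have h4 := hadd _ _ _ _ (le_refl (gx f 2 ^ s)) (ih _ hrlt)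
        refine h4.trans ?_
        have e1 : gx f 2 ^ s + (s : R) * gx f 2 ^ s = (((s+1) : ℕ) : R) * gx f 2 ^ s := by
          push_cast; ring
        rw [e1]
        push_cast
        exact hmul _ _ _ _ le_rfl (aux_pow_le_pow hmul hc1 (Nat.le_succ s))

private lemma aux_Y (v : ℕ) (hv : 2 ≤ v) : 1 < gx f v := by
  by_contra hle
  push_neg at hle
  have hc := gx_two hadd hmul hpos htemp f hf0 hf1 hfm hfa hpm h2
  have hP : (Polynomial.C 1 + Polynomial.C v * Polynomial.X : Polynomial ℕ) ≠ 0 := by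
    intro h
    have h0 := congrArg (Polynomial.eval 0) h
    simp at h0
  refine hc.not_ge (htemp _ hP _ ?_)
  intro k
  have heval : (Polynomial.C 1 + Polynomial.C v * Polynomial.X : Polynomial ℕ).eval k
      = 1 + v * k := by simp
  rw [heval]
  have hpow : 2 ^ k ≤ v ^ k := Nat.pow_le_pow_left hv k
  have h2k : 0 < 2 ^ k := pow_pos (by norm_num) k
  have hvk : 0 < v ^ k := pow_pos (by omega) k
  have hrlt : v ^ k - 2 ^ k < v ^ k := by omega
  have h1 : gx f (2 ^ k) ≤ gx f (v ^ k) + gx f (v ^ k - 2 ^ k) := gx_le_of_sub hadd hmul hpos htemp f hf0 hf1 hfm hfa hpm h2 _ _ hpow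
  have hy2 : gx f (v ^ k) ≤ 1 := by
    rw [gx_pow hadd hmul hpos htemp f hf0 hf1 hfm hfa hpm h2]
    have h := aux_pow_mono hmul hle k
    rwa [one_pow] at h
  have h3 : gx f (v ^ k - 2 ^ k) ≤ ((k * v : ℕ) : R) * (1:R) ^ k :=
    aux_GB hadd hmul hpos htemp f hf0 hf1 hfm hfa hpm h2 v 1 le_rfl hle k _ hrlt
  rw [one_pow, mul_one] at h3
  calc gx f 2 ^ k = gx f (2 ^ k) := (gx_pow hadd hmul hpos htemp f hf0 hf1 hfm hfa hpm h2 2 k).symm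
  _ ≤ gx f (v ^ k) + gx f (v ^ k - 2 ^ k) := h1
  _ ≤ 1 + ((k * v : ℕ) : R) := hadd _ _ _ _ hy2 h3
  _ = ((1 + v * k : ℕ) : R) := by push_cast; ring

private lemma aux_one_le_gx (v : ℕ) (hv : 1 ≤ v) : 1 ≤ gx f v := by
  rcases eq_or_lt_of_le hv with h | h
  · rw [← h, gx_one hadd hmul hpos htemp f hf0 hf1 hfm hfa hpm h2]
  · exact (aux_Y hadd hmul hpos htemp f hf0 hf1 hfm hfa hpm h2 v h).le

private lemma aux_LB (v s : ℕ) (hv : 1 ≤ v) (hsv : 2 ^ s ≤ v) : gx f 2 ^ s ≤ gx f v := by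
  rcases eq_or_lt_of_le hv with h1 | h1
  · have hs : s = 0 := by
      by_contra hs
      have h2' : 1 < 2 ^ s := Nat.one_lt_two_pow_iff.mpr hs
      omega
    subst hs
    rw [← h1, gx_one hadd hmul hpos htemp f hf0 hf1 hfm hfa hpm h2, pow_zero]
  · have hy := aux_Y hadd hmul hpos htemp f hf0 hf1 hfm hfa hpm h2 v h1
    have hy0 : gx f v ≠ 0 := by
      intro h
      rw [h] at hy
      exact lt_irrefl _ (hpos.trans hy)
    have hP : (Polynomial.C 1 + Polynomial.C v * Polynomial.X : Polynomial ℕ) ≠ 0 := by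
      intro h
      have h0 := congrArg (Polynomial.eval 0) h
      simp at h0
    apply aux_div hmul htemp hy0 _ hP
    intro k
    have heval : (Polynomial.C 1 + Polynomial.C v * Polynomial.X : Polynomial ℕ).eval k
        = 1 + v * k := by simp
    rw [heval, ← pow_mul]
    have hpow : 2 ^ (s * k) ≤ v ^ k := by
      rw [pow_mul]
      exact Nat.pow_le_pow_left hsv k
    have h2k : 0 < 2 ^ (s * k) := pow_pos (by norm_num) (s * k)
    have hvk : 0 < v ^ k := pow_pos (by omega) k
    have hrlt : v ^ k - 2 ^ (s * k) < v ^ k := by omega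
    have hsub : gx f (2 ^ (s * k)) ≤ gx f (v ^ k) + gx f (v ^ k - 2 ^ (s * k)) :=
      gx_le_of_sub hadd hmul hpos htemp f hf0 hf1 hfm hfa hpm h2 _ _ hpow
    have h3 : gx f (v ^ k - 2 ^ (s * k)) ≤ ((k * v : ℕ) : R) * gx f v ^ k :=
      aux_GB hadd hmul hpos htemp f hf0 hf1 hfm hfa hpm h2 v (gx f v) hy.le le_rfl k _ hrlt
    calc gx f 2 ^ (s * k) = gx f (2 ^ (s * k)) := (gx_pow hadd hmul hpos htemp f hf0 hf1 hfm hfa hpm h2 2 _).symm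
    _ ≤ gx f (v ^ k) + gx f (v ^ k - 2 ^ (s * k)) := hsub
    _ ≤ gx f v ^ k + ((k * v : ℕ) : R) * gx f v ^ k :=
        hadd _ _ _ _ (le_of_eq (gx_pow hadd hmul hpos htemp f hf0 hf1 hfm hfa hpm h2 v k)) h3
    _ = ((1 + v * k : ℕ) : R) * gx f v ^ k := by push_cast; ring

private lemma aux_UB' (s v : ℕ) (hv : v < 2 ^ s) : gx f v ≤ gx f 2 ^ s := by
  have hc := gx_two hadd hmul hpos htemp f hf0 hf1 hfm hfa hpm h2
  have hc0 : gx f 2 ^ s ≠ 0 := by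
    apply pow_ne_zero
    intro h
    rw [h] at hc
    exact lt_irrefl _ (hpos.trans hc)
  have hP : (Polynomial.C 1 + Polynomial.C s * Polynomial.X : Polynomial ℕ) ≠ 0 := by
    intro h
    have h0 := congrArg (Polynomial.eval 0) h
    simp at h0
  apply aux_div hmul htemp hc0 _ hP
  intro k
  have heval : (Polynomial.C 1 + Polynomial.C s * Polynomial.X : Polynomial ℕ).eval k
      = 1 + s * k := by simp
  rw [heval]
  rcases Nat.eq_zero_or_pos k with hk | hk
  · subst hk
    simp only [pow_zero, Nat.mul_zero, Nat.add_zero, Nat.cast_one, mul_one]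
    exact le_rfl
  · have hvk : v ^ k < 2 ^ (s * k) := by
      rw [pow_mul]
      exact Nat.pow_lt_pow_left hv (by omega)
    have h1 : gx f (v ^ k) ≤ ((s * k : ℕ) : R) * gx f 2 ^ (s * k) := aux_UB hadd hmul hpos htemp f hf0 hf1 hfm hfa hpm h2 (s * k) _ hvk
    calc gx f v ^ k = gx f (v ^ k) := (gx_pow hadd hmul hpos htemp f hf0 hf1 hfm hfa hpm h2 v k).symm
    _ ≤ ((s * k : ℕ) : R) * gx f 2 ^ (s * k) := h1
    _ ≤ ((1 + s * k : ℕ) : R) * (gx f 2 ^ s) ^ k := by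
        rw [← pow_mul]
        exact hmul _ _ _ _ (aux_cast_mono hadd hmul hpos (by omega)) le_rfl

private lemma aux_mono (u v : ℕ) (huv : u ≤ v) (hv : 1 ≤ v) : gx f u ≤ gx f v := by
  have hy1 := aux_one_le_gx hadd hmul hpos htemp f hf0 hf1 hfm hfa hpm h2 v hv
  have hy0 : gx f v ≠ 0 := by
    intro h
    rw [h] at hy1
    exact lt_irrefl _ (hpos.trans_le hy1)
  have hP : (Polynomial.C 2 : Polynomial ℕ) ≠ 0 := by
    intro h
    have h0 := congrArg (Polynomial.eval 0) h
    simp at h0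
  apply aux_div hmul htemp hy0 _ hP
  intro k
  simp only [Polynomial.eval_C]
  have hvk1 : v ^ k ≠ 0 := (pow_pos hv k).ne'
  have hlt : v ^ k < 2 ^ (Nat.log 2 (v ^ k) + 1) := Nat.lt_pow_succ_log_self (by norm_num) _
  have hle2 : 2 ^ Nat.log 2 (v ^ k) ≤ v ^ k := Nat.pow_log_le_self 2 hvk1
  have huk : u ^ k < 2 ^ (Nat.log 2 (v ^ k) + 1) :=
    lt_of_le_of_lt (Nat.pow_le_pow_left huv k) hlt
  have h1 : gx f (u ^ k) ≤ gx f 2 ^ (Nat.log 2 (v ^ k) + 1) := aux_UB' hadd hmul hpos htemp f hf0 hf1 hfm hfa hpm h2 _ _ huk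
  have hh2 : gx f 2 ^ Nat.log 2 (v ^ k) ≤ gx f (v ^ k) :=
    aux_LB hadd hmul hpos htemp f hf0 hf1 hfm hfa hpm h2 (v ^ k) _ (Nat.one_le_iff_ne_zero.mpr hvk1) hle2
  have h3 : gx f 2 ≤ ((2:ℕ) : R) := gx_cast hadd hmul hpos htemp f hf0 hf1 hfm hfa hpm h2 2
  calc gx f u ^ k = gx f (u ^ k) := (gx_pow hadd hmul hpos htemp f hf0 hf1 hfm hfa hpm h2 u k).symm
  _ ≤ gx f 2 ^ (Nat.log 2 (v ^ k) + 1) := h1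
  _ = gx f 2 ^ Nat.log 2 (v ^ k) * gx f 2 := pow_succ _ _
  _ ≤ gx f (v ^ k) * ((2:ℕ) : R) := hmul _ _ _ _ hh2 h3
  _ = ((2:ℕ) : R) * gx f v ^ k := by rw [gx_pow hadd hmul hpos htemp f hf0 hf1 hfm hfa hpm h2, mul_comm]

private lemma aux_mult (m n : ℕ) (hm : 1 ≤ m) (hn : 1 ≤ n) :
    gx f (m * n) = gx f m * gx f n := by
  refine le_antisymm (gx_mul hadd hmul hpos htemp f hf0 hf1 hfm hfa hpm h2 m n) ?_
  have hmn : 1 ≤ m * n := Nat.one_le_iff_ne_zero.mpr (Nat.mul_ne_zero (by omega) (by omega))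
  have hy1 := aux_one_le_gx hadd hmul hpos htemp f hf0 hf1 hfm hfa hpm h2 (m * n) hmn
  have hy0 : gx f (m * n) ≠ 0 := by
    intro h
    rw [h] at hy1
    exact lt_irrefl _ (hpos.trans_le hy1)
  have hP : (Polynomial.C 4 : Polynomial ℕ) ≠ 0 := by
    intro h
    have h0 := congrArg (Polynomial.eval 0) h
    simp at h0
  apply aux_div hmul htemp hy0 _ hP
  intro k
  simp only [Polynomial.eval_C]
  have hmk0 : m ^ k ≠ 0 := (pow_pos hm k).ne'
  have hnk0 : n ^ k ≠ 0 := (pow_pos hn k).ne'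
  have hmnk0 : (m * n) ^ k ≠ 0 := (pow_pos (Nat.lt_of_lt_of_le one_pos hmn) k).ne'
  have hma : m ^ k < 2 ^ (Nat.log 2 (m ^ k) + 1) := Nat.lt_pow_succ_log_self (by norm_num) _
  have hnb : n ^ k < 2 ^ (Nat.log 2 (n ^ k) + 1) := Nat.lt_pow_succ_log_self (by norm_num) _
  have hab : Nat.log 2 (m ^ k) + Nat.log 2 (n ^ k) ≤ Nat.log 2 ((m * n) ^ k) := by
    apply (Nat.le_log_iff_pow_le (by norm_num) hmnk0).mpr
    calc 2 ^ (Nat.log 2 (m ^ k) + Nat.log 2 (n ^ k))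
        = 2 ^ Nat.log 2 (m ^ k) * 2 ^ Nat.log 2 (n ^ k) := pow_add 2 _ _
    _ ≤ m ^ k * n ^ k :=
        Nat.mul_le_mul (Nat.pow_log_le_self 2 hmk0) (Nat.pow_log_le_self 2 hnk0)
    _ = (m * n) ^ k := (mul_pow m n k).symm
  have hc1 : 1 ≤ gx f 2 := (gx_two hadd hmul hpos htemp f hf0 hf1 hfm hfa hpm h2).le
  have h1 : gx f m ^ k ≤ gx f 2 ^ (Nat.log 2 (m ^ k) + 1) := by
    rw [← gx_pow hadd hmul hpos htemp f hf0 hf1 hfm hfa hpm h2]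
    exact aux_UB' hadd hmul hpos htemp f hf0 hf1 hfm hfa hpm h2 _ _ hma
  have hh2 : gx f n ^ k ≤ gx f 2 ^ (Nat.log 2 (n ^ k) + 1) := by
    rw [← gx_pow hadd hmul hpos htemp f hf0 hf1 hfm hfa hpm h2]
    exact aux_UB' hadd hmul hpos htemp f hf0 hf1 hfm hfa hpm h2 _ _ hnb
  have h3 : gx f 2 ^ Nat.log 2 ((m * n) ^ k) ≤ gx f ((m * n) ^ k) :=
    aux_LB hadd hmul hpos htemp f hf0 hf1 hfm hfa hpm h2 _ _ (Nat.one_le_iff_ne_zero.mpr hmnk0) (Nat.pow_log_le_self 2 hmnk0)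
  have h4 : gx f 2 ≤ ((2:ℕ) : R) := gx_cast hadd hmul hpos htemp f hf0 hf1 hfm hfa hpm h2 2
  calc (gx f m * gx f n) ^ k = gx f m ^ k * gx f n ^ k := mul_pow _ _ _
  _ ≤ gx f 2 ^ (Nat.log 2 (m ^ k) + 1) * gx f 2 ^ (Nat.log 2 (n ^ k) + 1) :=
      hmul _ _ _ _ h1 hh2
  _ = gx f 2 ^ (Nat.log 2 (m ^ k) + Nat.log 2 (n ^ k)) * (gx f 2 * gx f 2) := by
      ring
  _ ≤ gx f 2 ^ Nat.log 2 ((m * n) ^ k) * (((2:ℕ) : R) * ((2:ℕ) : R)) :=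
      hmul _ _ _ _ (aux_pow_le_pow hmul hc1 hab) (hmul _ _ _ _ h4 h4)
  _ ≤ gx f ((m * n) ^ k) * (((2:ℕ) : R) * ((2:ℕ) : R)) := hmul _ _ _ _ h3 le_rfl
  _ = ((4:ℕ) : R) * gx f (m * n) ^ k := by rw [gx_pow hadd hmul hpos htemp f hf0 hf1 hfm hfa hpm h2]; push_cast; ring

private lemma aux_strict (u v : ℕ) (hu : 1 ≤ u) (huv : u < v) : gx f u < gx f v := by
  obtain ⟨k, hk⟩ := nat_pow_gap hu huv
  by_contra hle
  push_neg at hle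
  have hgu1 : 1 ≤ gx f u := aux_one_le_gx hadd hmul hpos htemp f hf0 hf1 hfm hfa hpm h2 u hu
  have ht0 : gx f u ^ k ≠ 0 := by
    have hh := aux_one_le_pow hmul hgu1 k
    intro h
    rw [h] at hh
    exact lt_irrefl _ (hpos.trans_le hh)
  have h1 : gx f (2 * u ^ k) = gx f 2 * gx f u ^ k := by
    rw [aux_mult hadd hmul hpos htemp f hf0 hf1 hfm hfa hpm h2 2 (u ^ k) (by norm_num) (Nat.one_le_iff_ne_zero.mpr (pow_pos hu k).ne'),
      gx_pow hadd hmul hpos htemp f hf0 hf1 hfm hfa hpm h2]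
  have hvk1 : 1 ≤ v ^ k := Nat.one_le_iff_ne_zero.mpr (pow_pos (by omega) k).ne'
  have hh2 : gx f (2 * u ^ k) ≤ gx f (v ^ k) := aux_mono hadd hmul hpos htemp f hf0 hf1 hfm hfa hpm h2 _ _ hk hvk1
  have h3 : gx f (v ^ k) ≤ gx f u ^ k := by
    rw [gx_pow hadd hmul hpos htemp f hf0 hf1 hfm hfa hpm h2]
    exact aux_pow_mono hmul hle k
  exact aux_cancel hmul (gx_two hadd hmul hpos htemp f hf0 hf1 hfm hfa hpm h2) ht0 (by rw [← h1]; exact hh2.trans h3)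

private lemma aux_iff (a b : ℕ) : gx f a ≤ gx f b ↔ a ≤ b := by
  rcases Nat.eq_zero_or_pos a with ha | ha
  · subst ha
    constructor
    · intro _; exact Nat.zero_le b
    · intro _
      rw [gx_zero hadd hmul hpos htemp f hf0 hf1 hfm hfa hpm h2]
      exact aux_nonneg hmul hpos _
  · rcases Nat.eq_zero_or_pos b with hb | hb
    · subst hb
      constructor
      · intro h
        exfalso
        have h1 := aux_one_le_gx hadd hmul hpos htemp f hf0 hf1 hfm hfa hpm h2 a ha
        rw [gx_zero hadd hmul hpos htemp f hf0 hf1 hfm hfa hpm h2] at h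
        exact lt_irrefl _ (hpos.trans_le (h1.trans h))
      · intro h; omega
    · constructor
      · intro h
        by_contra hab
        push_neg at hab
        exact (aux_strict hadd hmul hpos htemp f hf0 hf1 hfm hfa hpm h2 b a hb hab).not_ge h
      · intro h
        exact aux_mono hadd hmul hpos htemp f hf0 hf1 hfm hfa hpm h2 a b h hb

private lemma gx_int (m : ℤ) : f ((m : A)) = gx f m.natAbs := by
  have key : ∀ n : ℕ, f (((n : ℤ) : A)) = gx f n := by
    intro n
    unfold gx
    rw [Int.cast_natCast]
  rcases Int.natAbs_eq m with h | h
  · conv_lhs => rw [h]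
    exact key _
  · conv_lhs => rw [h]
    have he : (((-(m.natAbs : ℤ)) : ℤ) : A) = -(((m.natAbs : ℤ)) : A) := by push_cast; ring
    rw [he, aux_fneg hadd hmul hpos htemp f hf0 hf1 hfm hfa hpm h2, key]

end TemperedMain

/-- A tempered power-multiplicative seminorm with `|2| > 1` restricts on the image of `ℤ`
to a multiplicative map multiplicatively equivalent to the archimedean absolute value. -/
theorem tempered_powmult_two_gt_one_archimedean {A : Type*} [CommRing A]
    {R : Type*} [Semifield R] [LinearOrder R]
    (hadd : ∀ x y z t : R, x ≤ z → y ≤ t → x + y ≤ z + t)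
    (hmul : ∀ x y z t : R, x ≤ z → y ≤ t → x * y ≤ z * t)
    (hpos : (0 : R) < 1)
    (htemp : ∀ P : Polynomial ℕ, P ≠ 0 →
      ∀ x : R, (∀ n : ℕ, x ^ n ≤ ((P.eval n : ℕ) : R)) → x ≤ 1)
    (f : A → R)
    (hf0 : f 0 = 0) (hf1 : f 1 = 1)
    (hfm : ∀ a b : A, f (a * b) ≤ f a * f b)
    (hfa : ∀ a b : A, f (a + b) ≤ f a + f b)
    (hpm : ∀ (a : A) (n : ℕ), f (a ^ n) = f a ^ n)
    (h2 : 1 < f ((2 : ℤ) : A)) :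
    (∀ m n : ℤ, f ((m * n : ℤ) : A) = f ((m : ℤ) : A) * f ((n : ℤ) : A)) ∧
      (∀ m n : ℤ, f ((m : ℤ) : A) ≤ f ((n : ℤ) : A) ↔ |m| ≤ |n|) := by
  have gmul_all : ∀ a b : ℕ, gx f (a * b) = gx f a * gx f b := by
    intro a b
    rcases Nat.eq_zero_or_pos a with ha | ha
    · subst ha
      rw [Nat.zero_mul, gx_zero hadd hmul hpos htemp f hf0 hf1 hfm hfa hpm h2, zero_mul]
    rcases Nat.eq_zero_or_pos b with hb | hb
    · subst hb
      rw [Nat.mul_zero, gx_zero hadd hmul hpos htemp f hf0 hf1 hfm hfa hpm h2, mul_zero]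
    exact aux_mult hadd hmul hpos htemp f hf0 hf1 hfm hfa hpm h2 a b ha hb
  constructor
  · intro m n
    rw [gx_int hadd hmul hpos htemp f hf0 hf1 hfm hfa hpm h2 (m * n), gx_int hadd hmul hpos htemp f hf0 hf1 hfm hfa hpm h2 m, gx_int hadd hmul hpos htemp f hf0 hf1 hfm hfa hpm h2 n, Int.natAbs_mul]
    exact gmul_all _ _
  · intro m n
    rw [gx_int hadd hmul hpos htemp f hf0 hf1 hfm hfa hpm h2 m, gx_int hadd hmul hpos htemp f hf0 hf1 hfm hfa hpm h2 n, aux_iff hadd hmul hpos htemp f hf0 hf1 hfm hfa hpm h2, Int.abs_eq_natAbs, Int.abs_eq_natAbs]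
    exact Nat.cast_le.symm
end

section
/- Let A be a commutative ring, R a positive totally ordered aura with tempered growth, and |·| : A → R a multiplicative seminorm. Then the following are equivalent: (1) |·| is non-archimedean, i.e., |a + b| ≤ max(|a|, |b|) for all a, b ∈ A; (2) |2| ≤ 1, where 2 denotes the image of 2 ∈ ℤ in A; (3) |n| ≤ 1 for every n ∈ ℕ (image of n in A). -/
/-- For a tempered multiplicative seminorm, the following are equivalent:
(1) non-archimedean; (2) `|2| ≤ 1`; (3) `|n| ≤ 1` for all `n : ℕ`. -/
theorem tempered_mult_nonarchimedean_iff {A : Type*} [CommRing A]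
    {R : Type*} [Semifield R] [LinearOrder R]
    (hadd : ∀ x y z t : R, x ≤ z → y ≤ t → x + y ≤ z + t)
    (hmul : ∀ x y z t : R, x ≤ z → y ≤ t → x * y ≤ z * t)
    (hpos : (0 : R) < 1)
    (htemp : ∀ P : Polynomial ℕ, P ≠ 0 →
      ∀ x : R, (∀ n : ℕ, x ^ n ≤ ((P.eval n : ℕ) : R)) → x ≤ 1)
    (f : A → R)
    (hf0 : f 0 = 0) (hf1 : f 1 = 1)
    (hfm : ∀ a b : A, f (a * b) = f a * f b)
    (hfa : ∀ a b : A, f (a + b) ≤ f a + f b) :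
    ((∀ a b : A, f (a + b) ≤ max (f a) (f b)) ↔ f ((2 : ℤ) : A) ≤ 1) ∧
      (f ((2 : ℤ) : A) ≤ 1 ↔ ∀ n : ℕ, f ((n : ℕ) : A) ≤ 1) := by
  -- every element of R is nonnegative
  have hnonneg : ∀ x : R, 0 ≤ x := by
    intro x
    by_contra hx
    have hx' : x < 0 := lt_of_not_ge hx
    have hxne : x ≠ 0 := ne_of_lt hx'
    rcases le_total x⁻¹ 0 with h | h
    · have h2 := hmul x x⁻¹ 0 0 hx'.le h
      rw [mul_inv_cancel₀ hxne, mul_zero] at h2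
      exact absurd (lt_of_lt_of_le hpos h2) (lt_irrefl 0)
    · have h2 := hmul x x⁻¹ 0 x⁻¹ hx'.le le_rfl
      rw [mul_inv_cancel₀ hxne, zero_mul] at h2
      exact absurd (lt_of_lt_of_le hpos h2) (lt_irrefl 0)
  -- natural cast is monotone
  have hcast : ∀ m n : ℕ, m ≤ n → ((m : ℕ) : R) ≤ ((n : ℕ) : R) := by
    intro m n hmn
    obtain ⟨k, rfl⟩ := Nat.exists_eq_add_of_le hmn
    rw [Nat.cast_add]
    calc (m : R) = (m : R) + 0 := by rw [add_zero]
    _ ≤ (m : R) + (k : R) := hadd _ _ _ _ le_rfl (hnonneg _)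
  -- powers are monotone
  have hpow : ∀ x y : R, x ≤ y → ∀ n : ℕ, x ^ n ≤ y ^ n := by
    intro x y h n
    induction n with
    | zero => simp
    | succ n ih => rw [pow_succ, pow_succ]; exact hmul _ _ _ _ ih h
  -- f of powers
  have hfpow : ∀ (a : A) (k : ℕ), f (a ^ k) = f a ^ k := by
    intro a k
    induction k with
    | zero => simpa using hf1
    | succ k ih => rw [pow_succ, pow_succ, hfm, ih]
  have hcast2 : ((2 : ℤ) : A) = ((2 : ℕ) : A) := by push_cast; ring
  -- (2) → (3)
  have h23 : f ((2 : ℤ) : A) ≤ 1 → ∀ n : ℕ, f ((n : ℕ) : A) ≤ 1 := by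
    intro h2 n
    have h2' : f ((2 : ℕ) : A) ≤ 1 := by rwa [hcast2] at h2
    -- binary digit bound
    have hlog : ∀ m : ℕ, f ((m : ℕ) : A) ≤ ((Nat.log 2 m + 1 : ℕ) : R) := by
      intro m
      induction m using Nat.strong_induction_on with
      | _ m ih =>
        rcases Nat.eq_zero_or_pos m with rfl | hm
        · rw [Nat.cast_zero, hf0]; exact hnonneg _
        · set q := m / 2 with hq
          have hmqr : 2 * q + m % 2 = m := Nat.div_add_mod m 2
          have hr2 : m % 2 < 2 := Nat.mod_lt m (by norm_num)
          have hfr : f ((m % 2 : ℕ) : A) ≤ 1 := by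
            interval_cases h : m % 2
            · rw [Nat.cast_zero, hf0]; exact hpos.le
            · rw [Nat.cast_one, hf1]
          have hstep : f ((m : ℕ) : A) ≤ f ((q : ℕ) : A) + 1 := by
            have hA : ((m : ℕ) : A) = ((2 : ℕ) : A) * ((q : ℕ) : A) + ((m % 2 : ℕ) : A) := by
              rw [← Nat.cast_mul, ← Nat.cast_add, hmqr]
            calc f ((m : ℕ) : A) ≤ f (((2 : ℕ) : A) * ((q : ℕ) : A)) + f ((m % 2 : ℕ) : A) := by
                  rw [hA]; exact hfa _ _
            _ = f ((2 : ℕ) : A) * f ((q : ℕ) : A) + f ((m % 2 : ℕ) : A) := by rw [hfm]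
            _ ≤ 1 * f ((q : ℕ) : A) + 1 := hadd _ _ _ _ (hmul _ _ _ _ h2' le_rfl) hfr
            _ = f ((q : ℕ) : A) + 1 := by rw [one_mul]
          rcases Nat.eq_zero_or_pos q with hq0 | hqpos
          · have : f ((m : ℕ) : A) ≤ 1 := by
              rw [hq0] at hstep
              rw [Nat.cast_zero, hf0, zero_add] at hstep
              exact hstep
            calc f ((m : ℕ) : A) ≤ 1 := this
            _ = ((1 : ℕ) : R) := by rw [Nat.cast_one]
            _ ≤ ((Nat.log 2 m + 1 : ℕ) : R) := hcast _ _ (by omega)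
          · have hqlt : q < m := Nat.div_lt_self hm (by norm_num)
            have hih := ih q hqlt
            have hloglog : Nat.log 2 q + 1 ≤ Nat.log 2 m := by
              have h1 : 2 ^ (Nat.log 2 q + 1) ≤ m := by
                have := Nat.pow_log_le_self 2 hqpos.ne'
                calc 2 ^ (Nat.log 2 q + 1) = 2 * 2 ^ Nat.log 2 q := by ring
                _ ≤ 2 * q := by omega
                _ ≤ m := by omega
              exact (Nat.le_log_iff_pow_le (by norm_num) (by omega)).mpr h1
            calc f ((m : ℕ) : A) ≤ f ((q : ℕ) : A) + 1 := hstep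
            _ ≤ ((Nat.log 2 q + 1 : ℕ) : R) + 1 := hadd _ _ _ _ hih le_rfl
            _ = ((Nat.log 2 q + 1 + 1 : ℕ) : R) := by push_cast; ring
            _ ≤ ((Nat.log 2 m + 1 : ℕ) : R) := hcast _ _ (by omega)
    -- tempered growth argument
    set P : Polynomial ℕ := Polynomial.C (Nat.log 2 n + 1) * Polynomial.X + Polynomial.C 1 with hP
    have hPne : P ≠ 0 := by
      intro h
      have := congrArg (Polynomial.eval 0) h
      simp [hP] at this
    have hPeval : ∀ k : ℕ, P.eval k = (Nat.log 2 n + 1) * k + 1 := by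
      intro k; simp [hP]
    apply htemp P hPne
    intro k
    have hxk : f ((n : ℕ) : A) ^ k = f ((n ^ k : ℕ) : A) := by
      rw [← hfpow, Nat.cast_pow]
    rw [hxk, hPeval]
    have hnatlog : Nat.log 2 (n ^ k) + 1 ≤ (Nat.log 2 n + 1) * k + 1 := by
      rcases Nat.eq_zero_or_pos k with rfl | hk
      · simp
      rcases Nat.eq_zero_or_pos n with rfl | hn
      · rw [Nat.zero_pow (by omega)]; simp
      have hlt : n ^ k < 2 ^ ((Nat.log 2 n + 1) * k) := by
        rw [pow_mul]
        exact Nat.pow_lt_pow_left (Nat.lt_pow_succ_log_self (by norm_num) n) (by omega)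
      have := Nat.log_lt_of_lt_pow (pow_ne_zero k hn.ne') hlt
      omega
    exact le_trans (hlog (n ^ k)) (hcast _ _ hnatlog)
  -- (3) → (1)
  have h31 : (∀ n : ℕ, f ((n : ℕ) : A) ≤ 1) →
      ∀ a b : A, f (a + b) ≤ max (f a) (f b) := by
    intro h3 a b
    set M : R := max (f a) (f b) with hM
    have hfaM : f a ≤ M := le_max_left _ _
    have hfbM : f b ≤ M := le_max_right _ _
    -- sum bound
    have hsum : ∀ (m : ℕ) (g : ℕ → A) (c : R), (∀ i, i < m → f (g i) ≤ c) →
        f (∑ i ∈ Finset.range m, g i) ≤ ((m : ℕ) : R) * c := by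
      intro m g c hg
      induction m with
      | zero => simp [hf0]
      | succ m ih =>
        rw [Finset.sum_range_succ]
        calc f ((∑ i ∈ Finset.range m, g i) + g m)
            ≤ f (∑ i ∈ Finset.range m, g i) + f (g m) := hfa _ _
        _ ≤ ((m : ℕ) : R) * c + c :=
            hadd _ _ _ _ (ih (fun i hi => hg i (by omega))) (hg m (by omega))
        _ = ((m + 1 : ℕ) : R) * c := by push_cast; ring
    -- binomial bound
    have hbin : ∀ k : ℕ, f ((a + b) ^ k) ≤ ((k + 1 : ℕ) : R) * M ^ k := by
      intro k
      rw [add_pow]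
      apply hsum
      intro i hi
      have hik : i ≤ k := by omega
      calc f (a ^ i * b ^ (k - i) * ((k.choose i : ℕ) : A))
          = f a ^ i * f b ^ (k - i) * f ((k.choose i : ℕ) : A) := by
            rw [hfm, hfm, hfpow, hfpow]
      _ ≤ M ^ i * M ^ (k - i) * 1 :=
          hmul _ _ _ _ (hmul _ _ _ _ (hpow _ _ hfaM i) (hpow _ _ hfbM (k - i)))
            (h3 (k.choose i))
      _ = M ^ k := by rw [mul_one, ← pow_add, Nat.add_sub_cancel' hik]
    by_cases hM0 : M = 0
    · have ha0 : f a = 0 := le_antisymm (hM0 ▸ hfaM) (hnonneg _)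
      have hb0 : f b = 0 := le_antisymm (hM0 ▸ hfbM) (hnonneg _)
      calc f (a + b) ≤ f a + f b := hfa a b
      _ = M := by rw [ha0, hb0, hM0, add_zero]
    · set y : R := f (a + b) * M⁻¹ with hy
      have hyk : ∀ k : ℕ, y ^ k ≤ ((k + 1 : ℕ) : R) := by
        intro k
        have hMk : M ^ k ≠ 0 := pow_ne_zero k hM0
        calc y ^ k = f (a + b) ^ k * (M ^ k)⁻¹ := by
              rw [hy, mul_pow, inv_pow]
        _ = f ((a + b) ^ k) * (M ^ k)⁻¹ := by rw [hfpow]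
        _ ≤ (((k + 1 : ℕ) : R) * M ^ k) * (M ^ k)⁻¹ :=
            hmul _ _ _ _ (hbin k) le_rfl
        _ = ((k + 1 : ℕ) : R) := by
            rw [mul_assoc, mul_inv_cancel₀ hMk, mul_one]
      have hy1 : y ≤ 1 := by
        apply htemp (Polynomial.X + Polynomial.C 1)
        · intro h
          have := congrArg (Polynomial.eval 0) h
          simp at this
        · intro k
          simpa using hyk k
      calc f (a + b) = y * M := by
            rw [hy, mul_assoc, inv_mul_cancel₀ hM0, mul_one]
      _ ≤ 1 * M := hmul _ _ _ _ hy1 le_rfl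
      _ = M := one_mul M
  -- (1) → (2)
  have h12 : (∀ a b : A, f (a + b) ≤ max (f a) (f b)) → f ((2 : ℤ) : A) ≤ 1 := by
    intro h1
    have : ((2 : ℤ) : A) = 1 + 1 := by push_cast; ring
    rw [this]
    calc f (1 + 1 : A) ≤ max (f 1) (f 1) := h1 1 1
    _ = 1 := by rw [hf1, max_self]
  -- (3) → (2)
  have h32 : (∀ n : ℕ, f ((n : ℕ) : A) ≤ 1) → f ((2 : ℤ) : A) ≤ 1 := by
    intro h3
    rw [hcast2]
    exact h3 2
  exact ⟨⟨h12, fun h2 => h31 (h23 h2)⟩, ⟨h23, h32⟩⟩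
end

section
/- Let R be a positive totally ordered aura and |·| : ℚ → R a non-archimedean multiplicative seminorm with trivial kernel (|x| = 0 if and only if x = 0). Then either |x| = 1 for all nonzero x ∈ ℚ, or there exists a prime number p such that 0 < |p| < 1 and |x| = |p|^{v_p(x)} for every nonzero x ∈ ℚ, where v_p(x) ∈ ℤ denotes the p-adic valuation of x. -/
/-- A non-archimedean multiplicative seminorm on `ℚ` with trivial kernel is either
trivial or `p`-adic for some prime `p`: in the latter case `0 < |p| < 1` and
`|x| = |p| ^ v_p(x)` for all nonzero `x`. -/
theorem rational_nonarchimedean_places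
    {R : Type*} [Semifield R] [LinearOrder R]
    (hadd : ∀ x y z t : R, x ≤ z → y ≤ t → x + y ≤ z + t)
    (hmul : ∀ x y z t : R, x ≤ z → y ≤ t → x * y ≤ z * t)
    (hpos : (0 : R) < 1)
    (f : ℚ → R)
    (hf0 : f 0 = 0) (hf1 : f 1 = 1)
    (hfm : ∀ a b : ℚ, f (a * b) = f a * f b)
    (hfa : ∀ a b : ℚ, f (a + b) ≤ f a + f b)
    (hna : ∀ a b : ℚ, f (a + b) ≤ max (f a) (f b))
    (hker : ∀ x : ℚ, f x = 0 ↔ x = 0) :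
    (∀ x : ℚ, x ≠ 0 → f x = 1) ∨
      ∃ p : ℕ, p.Prime ∧ 0 < f (p : ℚ) ∧ f (p : ℚ) < 1 ∧
        ∀ x : ℚ, x ≠ 0 → f x = f (p : ℚ) ^ (padicValRat p x) := by
  classical
  -- basic order facts in R
  have nonneg : ∀ x : R, (0 : R) ≤ x := by
    intro x
    by_contra h
    push_neg at h
    have hx0 : x ≠ 0 := ne_of_lt h
    have h2 : x * x⁻¹ ≤ 0 * x⁻¹ := hmul x x⁻¹ 0 x⁻¹ h.le le_rfl
    rw [mul_inv_cancel₀ hx0, zero_mul] at h2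
    exact absurd (lt_of_lt_of_le hpos h2) (lt_irrefl 0)
  have pos_of_ne : ∀ x : R, x ≠ 0 → (0 : R) < x := fun x hx =>
    (nonneg x).lt_of_ne (Ne.symm hx)
  have fpos : ∀ x : ℚ, x ≠ 0 → 0 < f x := fun x hx =>
    pos_of_ne _ (fun h => hx ((hker x).mp h))
  have f_pow : ∀ (a : ℚ) (n : ℕ), f (a ^ n) = f a ^ n := by
    intro a n
    induction n with
    | zero => simpa using hf1
    | succ n ih => rw [pow_succ, pow_succ, hfm, ih]
  have sq_eq_one : ∀ x : R, 0 < x → x * x = 1 → x = 1 := by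
    intro x hx h
    rcases lt_trichotomy x 1 with hlt | he | hgt
    · have h2 : x * x ≤ x * 1 := hmul x x x 1 le_rfl hlt.le
      rw [mul_one] at h2
      exact absurd h (ne_of_lt (lt_of_le_of_lt h2 hlt))
    · exact he
    · have h2 : 1 * x ≤ x * x := hmul 1 x x x hgt.le le_rfl
      rw [one_mul] at h2
      exact absurd h.symm (ne_of_lt (lt_of_lt_of_le hgt h2))
  have f_neg_one : f (-1) = 1 := by
    apply sq_eq_one _ (fpos _ (by norm_num))
    rw [← hfm]; norm_num [hf1]
  have f_neg : ∀ x : ℚ, f (-x) = f x := by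
    intro x
    rw [show -x = -1 * x by ring, hfm, f_neg_one, one_mul]
  have f_nat_le : ∀ n : ℕ, f (n : ℚ) ≤ 1 := by
    intro n
    induction n with
    | zero => simpa [hf0] using hpos.le
    | succ n ih =>
      push_cast
      calc f ((n : ℚ) + 1) ≤ max (f (n : ℚ)) (f 1) := hna _ _
        _ ≤ 1 := by rw [hf1]; exact max_le ih le_rfl
  have f_int_abs : ∀ n : ℤ, f (n : ℚ) = f (n.natAbs : ℚ) := by
    intro n
    have hc : ((n.natAbs : ℤ) : ℚ) = (n.natAbs : ℚ) := Int.cast_natCast _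
    rcases Int.natAbs_eq n with h1 | h1
    · conv_lhs => rw [h1]
      rw [hc]
    · conv_lhs => rw [h1]
      rw [Int.cast_neg, f_neg, hc]
  have f_int_le : ∀ n : ℤ, f (n : ℚ) ≤ 1 := fun n => (f_int_abs n) ▸ f_nat_le n.natAbs
  -- relate f x to numerator and denominator
  have f_num_den : ∀ x : ℚ, f (x.num : ℚ) = f x * f (x.den : ℚ) := by
    intro x
    rw [← hfm]
    congr 1
    have hden : (x.den : ℚ) ≠ 0 := by exact_mod_cast x.den_nz
    exact (div_eq_iff hden).mp (Rat.num_div_den x)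
  by_cases H : ∀ n : ℕ, 0 < n → f (n : ℚ) = 1
  · left
    intro x hx
    have hden : f (x.den : ℚ) = 1 := H x.den x.pos
    have hnum : f (x.num : ℚ) = 1 := by
      rw [f_int_abs]
      exact H _ (Int.natAbs_pos.mpr (Rat.num_ne_zero.mpr hx))
    have := f_num_den x
    rw [hden, hnum, mul_one] at this
    exact this.symm
  · right
    push_neg at H
    obtain ⟨n₀, hn₀pos, hn₀⟩ := H
    have hex : ∃ n : ℕ, 0 < n ∧ f (n : ℚ) < 1 :=
      ⟨n₀, hn₀pos, lt_of_le_of_ne (f_nat_le n₀) hn₀⟩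
    set p := Nat.find hex with hp_def
    obtain ⟨hppos, hplt⟩ := Nat.find_spec hex
    rw [← hp_def] at hppos hplt
    have hmin : ∀ m : ℕ, m < p → 0 < m → f (m : ℚ) = 1 := by
      intro m hm hm0
      have h2 := Nat.find_min hex hm
      push_neg at h2
      exact le_antisymm (f_nat_le m) (h2 hm0)
    have hp1 : p ≠ 1 := by
      intro h
      rw [h] at hplt
      norm_num [hf1] at hplt
    have hp2 : 2 ≤ p := by omega
    have hpprime : p.Prime := by
      rw [Nat.prime_def_lt]
      refine ⟨hp2, fun m hm hdvd => ?_⟩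
      by_contra hm1
      have hm0 : 0 < m := Nat.pos_of_dvd_of_pos hdvd hppos
      have hm2 : 2 ≤ m := by omega
      obtain ⟨k, hk⟩ := hdvd
      have hk0 : 0 < k := by
        rcases Nat.eq_zero_or_pos k with h | h
        · rw [h, mul_zero] at hk; omega
        · exact h
      have hkp : k < p := by
        calc k < 2 * k := by omega
          _ ≤ m * k := Nat.mul_le_mul_right k hm2
          _ = p := hk.symm
      have h1 : f (m : ℚ) = 1 := hmin m hm hm0
      have h2 : f (k : ℚ) = 1 := hmin k hkp hk0
      have h3 : f (p : ℚ) = 1 := by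
        rw [hk]; push_cast; rw [hfm, h1, h2, mul_one]
      exact absurd h3 (ne_of_lt hplt)
    have fp_pos : 0 < f (p : ℚ) := fpos _ (by exact_mod_cast hppos.ne')
    have fp_ne : f (p : ℚ) ≠ 0 := fp_pos.ne'
    -- coprime numbers have value 1
    have hcop : ∀ m : ℕ, 0 < m → ¬ p ∣ m → f (m : ℚ) = 1 := by
      intro m hm0 hnd
      have hg : Nat.gcd p m = 1 := (Nat.Prime.coprime_iff_not_dvd hpprime).mpr hnd
      have hbez := Nat.gcd_eq_gcd_ab p m
      rw [hg] at hbez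
      have h1 : (1 : ℚ) = (p : ℚ) * ((Nat.gcdA p m : ℤ) : ℚ) + (m : ℚ) * ((Nat.gcdB p m : ℤ) : ℚ) := by
        exact_mod_cast congrArg (fun z : ℤ => (z : ℚ)) hbez
      have hle : (1 : R) ≤ max (f ((p : ℚ) * ((Nat.gcdA p m : ℤ) : ℚ)))
          (f ((m : ℚ) * ((Nat.gcdB p m : ℤ) : ℚ))) := by
        have := hna ((p : ℚ) * ((Nat.gcdA p m : ℤ) : ℚ)) ((m : ℚ) * ((Nat.gcdB p m : ℤ) : ℚ))
        rw [← h1, hf1] at this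
        exact this
      have hpa : f ((p : ℚ) * ((Nat.gcdA p m : ℤ) : ℚ)) < 1 := by
        rw [hfm]
        have h2 : f (p : ℚ) * f ((Nat.gcdA p m : ℤ) : ℚ) ≤ f (p : ℚ) * 1 :=
          hmul _ _ _ _ le_rfl (f_int_le _)
        rw [mul_one] at h2
        exact lt_of_le_of_lt h2 hplt
      have hmb : f ((m : ℚ) * ((Nat.gcdB p m : ℤ) : ℚ)) ≤ f (m : ℚ) := by
        rw [hfm]
        have h2 : f (m : ℚ) * f ((Nat.gcdB p m : ℤ) : ℚ) ≤ f (m : ℚ) * 1 :=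
          hmul _ _ _ _ le_rfl (f_int_le _)
        rwa [mul_one] at h2
      have h3 : (1 : R) ≤ f ((m : ℚ) * ((Nat.gcdB p m : ℤ) : ℚ)) := by
        rcases le_max_iff.mp hle with h | h
        · exact absurd h (not_le.mpr hpa)
        · exact h
      exact le_antisymm (f_nat_le m) (le_trans h3 hmb)
    -- valuation formula for naturals
    have hvnat : ∀ m : ℕ, 0 < m → f (m : ℚ) = f (p : ℚ) ^ (padicValNat p m) := by
      intro m hm0
      have hfac : p ^ m.factorization p * (m / p ^ m.factorization p) = m :=
        Nat.ordProj_mul_ordCompl_eq_self m p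
      have hnd : ¬ p ∣ (m / p ^ m.factorization p) :=
        Nat.not_dvd_ordCompl hpprime hm0.ne'
      have ht0 : 0 < m / p ^ m.factorization p := by
        rcases Nat.eq_zero_or_pos (m / p ^ m.factorization p) with h | h
        · rw [h, mul_zero] at hfac; omega
        · exact h
      have h4 : f (m : ℚ) = f (p : ℚ) ^ (m.factorization p) := by
        conv_lhs => rw [← hfac]
        push_cast
        rw [hfm, f_pow, hcop _ ht0 hnd, mul_one]
      rw [h4, Nat.factorization_def m hpprime]
    -- valuation formula for integers
    have hvint : ∀ n : ℤ, n ≠ 0 → f (n : ℚ) = f (p : ℚ) ^ (padicValInt p n) := by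
      intro n hn
      rw [f_int_abs, hvnat _ (Int.natAbs_pos.mpr hn)]
      rfl
    refine ⟨p, hpprime, fp_pos, hplt, fun x hx => ?_⟩
    have hnum0 : x.num ≠ 0 := Rat.num_ne_zero.mpr hx
    have hfden : f (x.den : ℚ) ≠ 0 := (fpos _ (by exact_mod_cast x.den_nz)).ne'
    have h5 : f x = f (x.num : ℚ) / f (x.den : ℚ) := by
      rw [eq_div_iff hfden]
      exact (f_num_den x).symm
    rw [h5, hvint _ hnum0, hvnat _ x.pos]
    unfold padicValRat
    rw [zpow_sub₀ fp_ne]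
    norm_cast
end

section
/- Let R be a positive totally ordered aura with tempered growth and |·| : ℤ → R a multiplicative seminorm. Then exactly one of the following holds: (i) |n| = 1 for every nonzero n ∈ ℤ (the trivial place); (ii) there exists a prime p such that |n| = 0 whenever p divides n and |n| = 1 otherwise (the p-residual place); (iii) there exists a prime p such that 0 < |p| < 1 and |n| = |p|^{v_p(n)} for every nonzero n ∈ ℤ, where v_p(n) is the p-adic valuation (the p-adic place); (iv) |2| > 1 and |·| is multiplicatively equivalent to the usual archimedean absolute value: |m·n| = |m|·|n| for all m, n ∈ ℤ and |m| ≤ |n| if and only if the usual absolute value of m is at most that of n (the archimedean place). -/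
section

variable {R : Type*} [Semifield R] [LinearOrder R]

/-- The trivial place: `|n| = 1` for every nonzero integer `n`. -/
def IsTrivialPlace (f : ℤ → R) : Prop :=
  ∀ n : ℤ, n ≠ 0 → f n = 1

/-- The `p`-residual place: `|n| = 0` if `p ∣ n` and `|n| = 1` otherwise. -/
def IsResidualPlace (f : ℤ → R) : Prop :=
  ∃ p : ℕ, p.Prime ∧ ∀ n : ℤ, ((p : ℤ) ∣ n → f n = 0) ∧ (¬ (p : ℤ) ∣ n → f n = 1)

/-- The `p`-adic place: `0 < |p| < 1` and `|n| = |p| ^ v_p(n)` for nonzero `n`. -/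
def IsPadicPlace (f : ℤ → R) : Prop :=
  ∃ p : ℕ, p.Prime ∧ 0 < f (p : ℤ) ∧ f (p : ℤ) < 1 ∧
    ∀ n : ℤ, n ≠ 0 → f n = f (p : ℤ) ^ (padicValInt p n)

/-- The archimedean place: `|2| > 1`, `|·|` is multiplicative on `ℤ` and it is
multiplicatively equivalent to the usual archimedean absolute value. -/
def IsArchimedeanPlace (f : ℤ → R) : Prop :=
  1 < f 2 ∧ (∀ m n : ℤ, f (m * n) = f m * f n) ∧
    ∀ m n : ℤ, f m ≤ f n ↔ |m| ≤ |n|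

/-- Classification of tempered multiplicative seminorms on `ℤ`: exactly one of the
trivial, `p`-residual, `p`-adic or archimedean alternatives holds. -/
theorem int_mult_seminorm_classification
    (hadd : ∀ x y z t : R, x ≤ z → y ≤ t → x + y ≤ z + t)
    (hmul : ∀ x y z t : R, x ≤ z → y ≤ t → x * y ≤ z * t)
    (hpos : (0 : R) < 1)
    (htemp : ∀ P : Polynomial ℕ, P ≠ 0 →
      ∀ x : R, (∀ n : ℕ, x ^ n ≤ ((P.eval n : ℕ) : R)) → x ≤ 1)
    (f : ℤ → R)
    (hf0 : f 0 = 0) (hf1 : f 1 = 1)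
    (hfm : ∀ a b : ℤ, f (a * b) = f a * f b)
    (hfa : ∀ a b : ℤ, f (a + b) ≤ f a + f b) :
    (IsTrivialPlace f ∨ IsResidualPlace f ∨ IsPadicPlace f ∨ IsArchimedeanPlace f) ∧
      ¬ (IsTrivialPlace f ∧ IsResidualPlace f) ∧
      ¬ (IsTrivialPlace f ∧ IsPadicPlace f) ∧
      ¬ (IsTrivialPlace f ∧ IsArchimedeanPlace f) ∧
      ¬ (IsResidualPlace f ∧ IsPadicPlace f) ∧
      ¬ (IsResidualPlace f ∧ IsArchimedeanPlace f) ∧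
      ¬ (IsPadicPlace f ∧ IsArchimedeanPlace f) := by
  classical
  -- basic order lemmas
  have mulnn : ∀ a b : R, 0 ≤ a → 0 ≤ b → 0 ≤ a * b := by
    intro a b ha hb; have := hmul 0 0 a b ha hb; simpa using this
  have onele_pow : ∀ a : R, 1 ≤ a → ∀ k : ℕ, 1 ≤ a ^ k := by
    intro a ha k; induction k with
    | zero => simp
    | succ k ih =>
      rw [pow_succ]
      have := hmul 1 1 (a ^ k) a ih ha; simpa using this
  have powle_one : ∀ a : R, a ≤ 1 → ∀ k : ℕ, a ^ k ≤ 1 := by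
    intro a ha k; induction k with
    | zero => simp
    | succ k ih =>
      rw [pow_succ]
      have := hmul (a ^ k) a 1 1 ih ha; simpa using this
  have pow_nonneg' : ∀ a : R, 0 ≤ a → ∀ k : ℕ, 0 ≤ a ^ k := by
    intro a ha k; induction k with
    | zero => simpa using hpos.le
    | succ k ih => rw [pow_succ]; exact mulnn _ _ ih ha
  have powle_powl : ∀ a b : R, a ≤ b → ∀ k : ℕ, a ^ k ≤ b ^ k := by
    intro a b h k; induction k with
    | zero => simp
    | succ k ih => rw [pow_succ, pow_succ]; exact hmul _ _ _ _ ih h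
  have invpos : ∀ c : R, 0 < c → 0 < c⁻¹ := by
    intro c hc
    rcases lt_or_ge 0 c⁻¹ with h | h
    · exact h
    · exfalso
      have h1 : c⁻¹ * c ≤ 0 * c := hmul _ _ _ _ h le_rfl
      rw [inv_mul_cancel₀ hc.ne', zero_mul] at h1
      exact absurd h1 (not_le.mpr hpos)
  have lecancel : ∀ a b c : R, 0 < c → a * c ≤ b * c → a ≤ b := by
    intro a b c hc h
    have h2 := hmul _ _ _ _ h (le_refl c⁻¹)
    rwa [mul_assoc, mul_assoc, mul_inv_cancel₀ hc.ne', mul_one, mul_one] at h2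
  have natnn : ∀ n : ℕ, (0 : R) ≤ (n : R) := by
    intro n; induction n with
    | zero => simp
    | succ n ih =>
      push_cast
      have := hadd 0 0 (n : R) 1 ih hpos.le; simpa using this
  have natmono : ∀ m n : ℕ, m ≤ n → (m : R) ≤ (n : R) := by
    intro m n h
    obtain ⟨k, rfl⟩ := Nat.exists_eq_add_of_le h
    push_cast
    have := hadd (m : R) 0 (m : R) (k : R) le_rfl (natnn k)
    simpa using this
  have onele_nat : ∀ n : ℕ, 1 ≤ n → (1 : R) ≤ (n : R) := by
    intro n h; have := natmono 1 n h; simpa using this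
  have pow_pos' : ∀ a : R, 0 < a → ∀ k : ℕ, 0 < a ^ k := by
    intro a ha k
    exact lt_of_le_of_ne (pow_nonneg' a ha.le k) (Ne.symm (pow_ne_zero k ha.ne'))
  -- basic f lemmas
  have fneg1 : f (-1) = 1 := by
    have hsq : f (-1) * f (-1) = 1 := by rw [← hfm]; norm_num [hf1]
    rcases lt_trichotomy (f (-1)) 1 with h | h | h
    · exfalso
      have h2 : f (-1) * f (-1) ≤ f (-1) * 1 := hmul _ _ _ _ le_rfl h.le
      rw [hsq, mul_one] at h2
      exact absurd (h2.trans_lt h) (lt_irrefl _)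
    · exact h
    · exfalso
      have h2 : 1 * f (-1) ≤ f (-1) * f (-1) := hmul _ _ _ _ h.le le_rfl
      rw [hsq, one_mul] at h2
      exact absurd (h.trans_le h2) (lt_irrefl _)
  have fneg : ∀ n : ℤ, f (-n) = f n := by
    intro n
    have h := hfm (-1) n
    rw [fneg1, one_mul] at h
    simpa using h
  have fnonneg : ∀ n : ℤ, 0 ≤ f n := by
    intro n
    by_contra h
    push_neg at h
    have h1 : f 0 ≤ f n + f (-n) := by have := hfa n (-n); simpa using this
    rw [hf0, fneg] at h1
    have h2 : f n + f n ≤ f n + 0 := hadd _ _ _ _ le_rfl h.le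
    rw [add_zero] at h2
    exact absurd ((h1.trans h2).trans_lt h) (lt_irrefl _)
  have fpow : ∀ (n : ℤ) (k : ℕ), f (n ^ k) = f n ^ k := by
    intro n k; induction k with
    | zero => simpa using hf1
    | succ k ih => rw [pow_succ, hfm, ih, pow_succ]
  have fnat_le : ∀ n : ℕ, f (n : ℤ) ≤ (n : R) := by
    intro n; induction n with
    | zero => simp [hf0]
    | succ n ih =>
      push_cast
      have h1 : f ((n : ℤ) + 1) ≤ f (n : ℤ) + f 1 := hfa _ _
      rw [hf1] at h1
      exact h1.trans (hadd _ _ _ _ ih le_rfl)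
  have fabs : ∀ n : ℤ, f n = f (n.natAbs : ℤ) := by
    intro n
    rcases Int.natAbs_eq n with h | h
    · exact congrArg f h
    · calc f n = f (-(n.natAbs : ℤ)) := by rw [← h]
        _ = f ((n.natAbs : ℕ) : ℤ) := fneg _
  -- a convenient form of tempered growth
  have tempered : ∀ c : ℕ, 0 < c → ∀ x : R,
      (∀ k : ℕ, x ^ k ≤ ((c * (k + 1) : ℕ) : R)) → x ≤ 1 := by
    intro c hc x hx
    refine htemp (Polynomial.C c * (Polynomial.X + 1)) ?_ x ?_
    · intro h
      have h0 := congrArg (Polynomial.eval 0) h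
      simp at h0
      omega
    · intro n
      have he : (Polynomial.C c * (Polynomial.X + 1)).eval n = c * (n + 1) := by simp
      rw [he]
      exact hx n
  -- the base-b digit bound
  have coreBound : ∀ b : ℕ, 2 ≤ b → ∀ M : R, 1 ≤ M → f (b : ℤ) ≤ M →
      ∀ (k m : ℕ), m < b ^ k → f (m : ℤ) ≤ ((k * b : ℕ) : R) * M ^ k := by
    intro b hb M hM1 hfbM k
    induction k with
    | zero =>
      intro m hm
      have hm0 : m = 0 := by simpa using Nat.lt_one_iff.mp (by simpa using hm)
      subst hm0
      simp [hf0]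
    | succ k ih =>
      intro m hm
      have hb0 : 0 < b := by omega
      have hq : m / b < b ^ k := by
        rw [Nat.div_lt_iff_lt_mul hb0]
        calc m < b ^ (k + 1) := hm
          _ = b ^ k * b := pow_succ b k
      have hr : m % b < b := Nat.mod_lt m hb0
      have hdec : (m : ℤ) = (b : ℤ) * ((m / b : ℕ) : ℤ) + ((m % b : ℕ) : ℤ) := by
        exact_mod_cast (Nat.div_add_mod m b).symm
      have step1 : f (m : ℤ) ≤ f (b : ℤ) * f ((m / b : ℕ) : ℤ) + f ((m % b : ℕ) : ℤ) := by
        calc f (m : ℤ) = f ((b : ℤ) * ((m / b : ℕ) : ℤ) + ((m % b : ℕ) : ℤ)) := by rw [← hdec]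
          _ ≤ f ((b : ℤ) * ((m / b : ℕ) : ℤ)) + f ((m % b : ℕ) : ℤ) := hfa _ _
          _ = f (b : ℤ) * f ((m / b : ℕ) : ℤ) + f ((m % b : ℕ) : ℤ) := by rw [hfm]
      have step2 : f (b : ℤ) * f ((m / b : ℕ) : ℤ) + f ((m % b : ℕ) : ℤ)
          ≤ M * (((k * b : ℕ) : R) * M ^ k) + (b : R) :=
        hadd _ _ _ _ (hmul _ _ _ _ hfbM (ih _ hq))
          ((fnat_le _).trans (natmono _ _ hr.le))
      have step3 : M * (((k * b : ℕ) : R) * M ^ k) = ((k * b : ℕ) : R) * M ^ (k + 1) := by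
        ring
      have step4 : (b : R) ≤ (b : R) * M ^ (k + 1) := by
        have := hmul (b : R) 1 (b : R) (M ^ (k + 1)) le_rfl (onele_pow M hM1 (k + 1))
        simpa using this
      have step5 : ((k * b : ℕ) : R) * M ^ (k + 1) + (b : R)
          ≤ ((k * b : ℕ) : R) * M ^ (k + 1) + (b : R) * M ^ (k + 1) :=
        hadd _ _ _ _ le_rfl step4
      have step6 : ((k * b : ℕ) : R) * M ^ (k + 1) + (b : R) * M ^ (k + 1)
          = (((k + 1) * b : ℕ) : R) * M ^ (k + 1) := by
        push_cast; ring
      calc f (m : ℤ) ≤ M * (((k * b : ℕ) : R) * M ^ k) + (b : R) := step1.trans step2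
        _ = ((k * b : ℕ) : R) * M ^ (k + 1) + (b : R) := by rw [step3]
        _ ≤ ((k * b : ℕ) : R) * M ^ (k + 1) + (b : R) * M ^ (k + 1) := step5
        _ = (((k + 1) * b : ℕ) : R) * M ^ (k + 1) := step6
  -- exclusivity
  have exTR : ¬ (IsTrivialPlace f ∧ IsResidualPlace f) := by
    rintro ⟨hT, p, hp, hR⟩
    have h0 : f (p : ℤ) = 0 := (hR (p : ℤ)).1 dvd_rfl
    have h1 : f (p : ℤ) = 1 := hT _ (Int.natCast_ne_zero.mpr hp.pos.ne')
    rw [h0] at h1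
    exact hpos.ne h1
  have exTP : ¬ (IsTrivialPlace f ∧ IsPadicPlace f) := by
    rintro ⟨hT, p, hp, _, hplt, _⟩
    have h1 : f (p : ℤ) = 1 := hT _ (Int.natCast_ne_zero.mpr hp.pos.ne')
    rw [h1] at hplt
    exact absurd hplt (lt_irrefl _)
  have exTA : ¬ (IsTrivialPlace f ∧ IsArchimedeanPlace f) := by
    rintro ⟨hT, hA, _⟩
    have h1 : f 2 = 1 := hT 2 (by norm_num)
    rw [h1] at hA
    exact absurd hA (lt_irrefl _)
  have exRP : ¬ (IsResidualPlace f ∧ IsPadicPlace f) := by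
    rintro ⟨⟨p, hp, hR⟩, q, hq, hqpos, _, hform⟩
    have h0 : f (p : ℤ) = 0 := (hR (p : ℤ)).1 dvd_rfl
    have hp0 : ((p : ℕ) : ℤ) ≠ 0 := Int.natCast_ne_zero.mpr hp.pos.ne'
    have h1 := hform (p : ℤ) hp0
    rw [h0] at h1
    exact (pow_pos' _ hqpos _).ne' h1.symm
  have exRA : ¬ (IsResidualPlace f ∧ IsArchimedeanPlace f) := by
    rintro ⟨⟨p, hp, hR⟩, hA, _⟩
    by_cases hd : (p : ℤ) ∣ 2
    · have h1 := (hR 2).1 hd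
      rw [h1] at hA
      exact absurd (hpos.trans hA) (lt_irrefl _)
    · have h1 := (hR 2).2 hd
      rw [h1] at hA
      exact absurd hA (lt_irrefl _)
  have exPA : ¬ (IsPadicPlace f ∧ IsArchimedeanPlace f) := by
    rintro ⟨⟨p, hp, _, hplt, hform⟩, hA, _⟩
    have h1 := hform 2 (by norm_num)
    have hle : f (p : ℤ) ^ (padicValInt p 2) ≤ 1 := powle_one _ hplt.le _
    rw [← h1] at hle
    exact absurd (hA.trans_le hle) (lt_irrefl _)
  refine ⟨?_, exTR, exTP, exTA, exRP, exRA, exPA⟩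
  -- main case split
  by_cases hbig : ∃ N : ℕ, 1 < f (N : ℤ)
  · -- archimedean case
    obtain ⟨N, hN⟩ := hbig
    have hN2 : 2 ≤ N := by
      by_contra h
      interval_cases N
      · rw [Nat.cast_zero, hf0] at hN
        exact absurd (hpos.trans hN) (lt_irrefl _)
      · rw [Nat.cast_one, hf1] at hN
        exact absurd hN (lt_irrefl _)
    have hall : ∀ b : ℕ, 2 ≤ b → 1 < f (b : ℤ) := by
      intro b hb
      by_contra hle
      push_neg at hle
      have hbound : ∀ j : ℕ, f (N : ℤ) ^ j ≤ (((N * b) * (j + 1) : ℕ) : R) := by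
        intro j
        rcases Nat.eq_zero_or_pos j with rfl | hj
        · have h1 : (1 : R) ≤ ((N * b * (0 + 1) : ℕ) : R) :=
            onele_nat _ (by nlinarith)
          simpa using h1
        · have hlt : N ^ j < b ^ (N * j) := by
            calc N ^ j < (2 ^ N) ^ j := Nat.pow_lt_pow_left (Nat.lt_two_pow_self (n := N)) hj.ne'
              _ ≤ (b ^ N) ^ j := Nat.pow_le_pow_left (Nat.pow_le_pow_left hb N) j
              _ = b ^ (N * j) := by rw [← pow_mul]
          have h1 := coreBound b hb 1 le_rfl hle (N * j) (N ^ j) hlt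
          rw [one_pow, mul_one] at h1
          have h3 : ((N ^ j : ℕ) : ℤ) = (N : ℤ) ^ j := by push_cast; ring
          calc f (N : ℤ) ^ j = f (((N ^ j : ℕ) : ℤ)) := by rw [h3, fpow]
            _ ≤ ((N * j * b : ℕ) : R) := h1
            _ ≤ (((N * b) * (j + 1) : ℕ) : R) := by
                refine natmono _ _ ?_
                calc N * j * b = N * b * j := by ring
                  _ ≤ N * b * j + N * b := Nat.le_add_right _ _
                  _ = N * b * (j + 1) := by ring
      have := tempered (N * b) (by nlinarith) (f (N : ℤ)) hbound
      exact absurd (hN.trans_le this) (lt_irrefl _)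
    have fge1 : ∀ a : ℕ, 1 ≤ a → 1 ≤ f (a : ℤ) := by
      intro a ha
      rcases Nat.lt_or_ge a 2 with h | h
      · have : a = 1 := by omega
        subst this; simp [hf1]
      · exact (hall a h).le
    have fmono : ∀ m n : ℕ, 1 ≤ m → m ≤ n → f (m : ℤ) ≤ f (n : ℤ) := by
      intro m n hm hmn
      rcases eq_or_lt_of_le hmn with rfl | hlt
      · exact le_rfl
      have hn2 : 2 ≤ n := by omega
      have hfn := hall n hn2
      have hfn0 : f (n : ℤ) ≠ 0 := (hpos.trans hfn).ne'
      have hbound : ∀ k : ℕ, (f (m : ℤ) * (f (n : ℤ))⁻¹) ^ k ≤ (((n * n) * (k + 1) : ℕ) : R) := by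
        intro k
        have hlt2 : m ^ k < n ^ (k + 1) := by
          calc m ^ k ≤ n ^ k := Nat.pow_le_pow_left hmn k
            _ < n ^ (k + 1) := Nat.pow_lt_pow_succ (by omega)
        have h1 := coreBound n hn2 (f (n : ℤ)) hfn.le le_rfl (k + 1) (m ^ k) hlt2
        have h2 : f (m : ℤ) ^ k ≤ (((k + 1) * n : ℕ) : R) * f (n : ℤ) ^ (k + 1) := by
          have e : ((m ^ k : ℕ) : ℤ) = (m : ℤ) ^ k := by push_cast; ring
          rw [← fpow, ← e]
          exact h1
        have h3 := hmul _ _ _ _ h2 (le_refl ((f (n : ℤ) ^ k)⁻¹))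
        have e1 : (f (m : ℤ) * (f (n : ℤ))⁻¹) ^ k = f (m : ℤ) ^ k * (f (n : ℤ) ^ k)⁻¹ := by
          rw [mul_pow, inv_pow]
        have e2 : (((k + 1) * n : ℕ) : R) * f (n : ℤ) ^ (k + 1) * (f (n : ℤ) ^ k)⁻¹
            = (((k + 1) * n : ℕ) : R) * f (n : ℤ) := by
          rw [pow_succ]
          calc (((k + 1) * n : ℕ) : R) * (f (n : ℤ) ^ k * f (n : ℤ)) * (f (n : ℤ) ^ k)⁻¹
              = (((k + 1) * n : ℕ) : R) * f (n : ℤ) * (f (n : ℤ) ^ k * (f (n : ℤ) ^ k)⁻¹) := by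
                ring
            _ = (((k + 1) * n : ℕ) : R) * f (n : ℤ) := by
                rw [mul_inv_cancel₀ (pow_ne_zero k hfn0), mul_one]
        rw [e2] at h3
        have h4 : (f (m : ℤ) * (f (n : ℤ))⁻¹) ^ k ≤ (((k + 1) * n : ℕ) : R) * f (n : ℤ) := by
          rw [e1]; exact h3
        have h5 : (((k + 1) * n : ℕ) : R) * f (n : ℤ) ≤ (((k + 1) * n : ℕ) : R) * (n : R) :=
          hmul _ _ _ _ le_rfl (fnat_le n)
        have h6 : (((k + 1) * n : ℕ) : R) * (n : R) = (((n * n) * (k + 1) : ℕ) : R) := by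
          push_cast; ring
        exact h4.trans (h5.trans_eq h6)
      have hx := tempered (n * n) (by nlinarith) _ hbound
      have h7 := hmul _ _ _ _ hx (le_refl (f (n : ℤ)))
      rwa [one_mul, mul_assoc, inv_mul_cancel₀ hfn0, mul_one] at h7
    -- strict monotonicity
    have aux2 : ∀ m k : ℕ, m ^ (k + 1) + (k + 1) * m ^ k ≤ (m + 1) ^ (k + 1) := by
      intro m k; induction k with
      | zero => simp
      | succ k ih =>
        have e : (m ^ (k + 1) + (k + 1) * m ^ k) * (m + 1)
            = m ^ (k + 2) + (k + 2) * m ^ (k + 1) + (k + 1) * m ^ k := by ring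
        calc m ^ (k + 2) + (k + 2) * m ^ (k + 1)
            ≤ m ^ (k + 2) + (k + 2) * m ^ (k + 1) + (k + 1) * m ^ k := Nat.le_add_right _ _
          _ = (m ^ (k + 1) + (k + 1) * m ^ k) * (m + 1) := e.symm
          _ ≤ (m + 1) ^ (k + 1) * (m + 1) := Nat.mul_le_mul ih (le_refl (m + 1))
          _ = (m + 1) ^ (k + 2) := (pow_succ _ _).symm
    have two_mul_le : ∀ m n : ℕ, 1 ≤ m → m < n → 2 * m ^ m ≤ n ^ m := by
      intro m n hm hmn
      obtain ⟨j, rfl⟩ : ∃ j, m = j + 1 := ⟨m - 1, by omega⟩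
      have h1 := aux2 (j + 1) j
      have h2 : (j + 1) * (j + 1) ^ j = (j + 1) ^ (j + 1) := by rw [pow_succ]; ring
      calc 2 * (j + 1) ^ (j + 1) = (j + 1) ^ (j + 1) + (j + 1) * (j + 1) ^ j := by
            rw [h2]; ring
        _ ≤ (j + 1 + 1) ^ (j + 1) := h1
        _ ≤ n ^ (j + 1) := Nat.pow_le_pow_left (by omega) _
    have fstrict : ∀ m n : ℕ, 1 ≤ m → m < n → f (m : ℤ) < f (n : ℤ) := by
      intro m n hm hmn
      refine lt_of_le_of_ne (fmono m n hm hmn.le) ?_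
      intro heq
      have hle := two_mul_le m n hm hmn
      have hmm1 : 1 ≤ 2 * m ^ m := Nat.one_le_iff_ne_zero.mpr (by positivity)
      have h1 : f ((2 * m ^ m : ℕ) : ℤ) ≤ f ((n ^ m : ℕ) : ℤ) := fmono _ _ hmm1 hle
      have h2 : f ((2 * m ^ m : ℕ) : ℤ) = f 2 * f (m : ℤ) ^ m := by
        have e : ((2 * m ^ m : ℕ) : ℤ) = 2 * (m : ℤ) ^ m := by push_cast; ring
        rw [e, hfm, fpow]
      have h3 : f ((n ^ m : ℕ) : ℤ) = f (n : ℤ) ^ m := by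
        have e : ((n ^ m : ℕ) : ℤ) = (n : ℤ) ^ m := by push_cast; ring
        rw [e, fpow]
      rw [h2, h3, ← heq] at h1
      have hfm1 : 1 ≤ f (m : ℤ) := fge1 m hm
      have hp0 : 0 < f (m : ℤ) ^ m := hpos.trans_le (onele_pow _ hfm1 m)
      have h4 : f 2 ≤ 1 := lecancel (f 2) 1 (f (m : ℤ) ^ m) hp0 (by rw [one_mul]; exact h1)
      have h5 : 1 < f 2 := by
        have := hall 2 le_rfl
        norm_num at this
        exact this
      exact absurd (h5.trans_le h4) (lt_irrefl _)
    have ftwo : 1 < f 2 := by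
      have := hall 2 le_rfl
      norm_num at this
      exact this
    have fiff : ∀ m n : ℤ, f m ≤ f n ↔ |m| ≤ |n| := by
      intro m n
      rw [fabs m, fabs n, Int.abs_eq_natAbs, Int.abs_eq_natAbs, Nat.cast_le]
      constructor
      · intro h
        by_contra hab
        push_neg at hab
        have hlt : f ((n.natAbs : ℕ) : ℤ) < f ((m.natAbs : ℕ) : ℤ) := by
          rcases Nat.eq_zero_or_pos n.natAbs with h0 | hb
          · rw [h0, Nat.cast_zero, hf0]
            have := fge1 m.natAbs (by omega)
            exact hpos.trans_le this
          · exact fstrict _ _ hb hab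
        exact absurd (h.trans_lt hlt) (lt_irrefl _)
      · intro h
        rcases Nat.eq_zero_or_pos m.natAbs with h0 | ha
        · rw [h0, Nat.cast_zero, hf0]
          exact fnonneg _
        · exact fmono _ _ ha h
    exact Or.inr (Or.inr (Or.inr ⟨ftwo, hfm, fiff⟩))
  · -- nonarchimedean case
    push_neg at hbig
    have fzle1 : ∀ z : ℤ, f z ≤ 1 := fun z => by rw [fabs]; exact hbig _
    by_cases hex : ∃ q : ℕ, 0 < q ∧ f (q : ℤ) < 1
    · -- residual or padic
      let p := Nat.find hex
      have hp : 0 < p ∧ f (p : ℤ) < 1 := Nat.find_spec hex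
      have hmin : ∀ q : ℕ, q < p → 0 < q → 1 ≤ f (q : ℤ) := by
        intro q hq hq0
        have := Nat.find_min hex hq
        push_neg at this
        exact this hq0
      have hp2 : 2 ≤ p := by
        by_contra h
        have hp1 : p = 1 := by omega
        rw [hp1, Nat.cast_one, hf1] at hp
        exact absurd hp.2 (lt_irrefl _)
      have hprime : p.Prime := by
        rw [Nat.prime_def_lt]
        refine ⟨hp2, fun d hd hdvd => ?_⟩
        by_contra hd1
        have hd0 : 0 < d := Nat.pos_of_dvd_of_pos hdvd hp.1
        have hd2 : 2 ≤ d := by omega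
        obtain ⟨t, ht⟩ := hdvd
        have ht0 : 0 < t := by
          rcases Nat.eq_zero_or_pos t with rfl | h'
          · rw [Nat.mul_zero] at ht; omega
          · exact h'
        have htlt : t < p := by nlinarith
        have hfd : f (d : ℤ) = 1 := le_antisymm (fzle1 _) (hmin d hd hd0)
        have hft : f (t : ℤ) = 1 := le_antisymm (fzle1 _) (hmin t htlt ht0)
        have hfp : f (p : ℤ) = 1 := by
          have e : ((p : ℕ) : ℤ) = (d : ℤ) * (t : ℤ) := by exact_mod_cast ht
          rw [e, hfm, hfd, hft, one_mul]
        rw [hfp] at hp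
        exact absurd hp.2 (lt_irrefl _)
      -- coprime lemma
      have hcop : ∀ m : ℕ, ¬ p ∣ m → f (m : ℤ) = 1 := by
        intro m hpm
        refine le_antisymm (fzle1 _) ?_
        by_contra hlt
        push_neg at hlt
        set c := max (f (p : ℤ)) (f (m : ℤ)) with hc
        have hc1 : c < 1 := max_lt hp.2 hlt
        have hcnn : 0 ≤ c := (fnonneg _).trans (le_max_left _ _)
        have hbez : ∀ k : ℕ, (1 : R) ≤ c ^ k + c ^ k := by
          intro k
          have hco : IsCoprime ((p : ℤ) ^ k) ((m : ℤ) ^ k) := by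
            have e1 : ((p : ℤ)) ^ k = ((p ^ k : ℕ) : ℤ) := by push_cast; ring
            have e2 : ((m : ℤ)) ^ k = ((m ^ k : ℕ) : ℤ) := by push_cast; ring
            rw [e1, e2, Nat.isCoprime_iff_coprime]
            exact Nat.Coprime.pow _ _ ((Nat.Prime.coprime_iff_not_dvd hprime).mpr hpm)
          obtain ⟨u, v, huv⟩ := hco
          calc (1 : R) = f (u * (p : ℤ) ^ k + v * (m : ℤ) ^ k) := by rw [huv, hf1]
            _ ≤ f (u * (p : ℤ) ^ k) + f (v * (m : ℤ) ^ k) := hfa _ _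
            _ = f u * f (p : ℤ) ^ k + f v * f (m : ℤ) ^ k := by
                rw [hfm, hfm, fpow, fpow]
            _ ≤ 1 * c ^ k + 1 * c ^ k :=
                hadd _ _ _ _
                  (hmul _ _ _ _ (fzle1 u) (powle_powl _ _ (le_max_left _ _) k))
                  (hmul _ _ _ _ (fzle1 v) (powle_powl _ _ (le_max_right _ _) k))
            _ = c ^ k + c ^ k := by rw [one_mul]
        have hc0 : c ≠ 0 := by
          intro h0
          have h1 := hbez 1
          rw [h0] at h1
          simp at h1
          exact absurd h1 (not_le.mpr hpos)
        have hinv : ∀ k : ℕ, (c⁻¹) ^ k ≤ ((2 * (k + 1) : ℕ) : R) := by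
          intro k
          have h1 := hmul 1 ((c⁻¹) ^ k) (c ^ k + c ^ k) ((c⁻¹) ^ k) (hbez k) le_rfl
          rw [one_mul] at h1
          have e : (c ^ k + c ^ k) * (c⁻¹) ^ k = 1 + 1 := by
            rw [inv_pow, add_mul, mul_inv_cancel₀ (pow_ne_zero k hc0)]
          rw [e] at h1
          calc (c⁻¹) ^ k ≤ 1 + 1 := h1
            _ = ((2 : ℕ) : R) := by push_cast; ring
            _ ≤ ((2 * (k + 1) : ℕ) : R) := natmono _ _ (by omega)
        have hc1' := tempered 2 (by omega) (c⁻¹) hinv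
        have h2 := hmul c (c⁻¹) c 1 le_rfl hc1'
        rw [mul_inv_cancel₀ hc0, mul_one] at h2
        exact absurd (h2.trans_lt hc1) (lt_irrefl _)
      -- the valuation formula
      have hform : ∀ n : ℤ, n ≠ 0 → f n = f (p : ℤ) ^ (padicValInt p n) := by
        intro n hn
        have ha0 : n.natAbs ≠ 0 := Int.natAbs_ne_zero.mpr hn
        have hv : padicValInt p n = (n.natAbs).factorization p := by
          have h1 : padicValInt p n = padicValNat p n.natAbs := rfl
          rw [h1, Nat.factorization_def _ hprime]
        have hdecomp : n.natAbs
            = p ^ ((n.natAbs).factorization p) * (n.natAbs / p ^ ((n.natAbs).factorization p)) :=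
          (Nat.ordProj_mul_ordCompl_eq_self n.natAbs p).symm
        have hnd : ¬ p ∣ (n.natAbs / p ^ ((n.natAbs).factorization p)) :=
          Nat.not_dvd_ordCompl hprime ha0
        calc f n = f ((n.natAbs : ℕ) : ℤ) := fabs n
          _ = f ((p : ℤ) ^ ((n.natAbs).factorization p)
                * ((n.natAbs / p ^ ((n.natAbs).factorization p) : ℕ) : ℤ)) := by
              congr 1
              rw [show ((n.natAbs : ℕ) : ℤ)
                  = ((p ^ ((n.natAbs).factorization p)
                    * (n.natAbs / p ^ ((n.natAbs).factorization p)) : ℕ) : ℤ) from by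
                exact_mod_cast congrArg (Nat.cast : ℕ → ℤ) hdecomp]
              push_cast
              ring
          _ = f (p : ℤ) ^ ((n.natAbs).factorization p)
                * f ((n.natAbs / p ^ ((n.natAbs).factorization p) : ℕ) : ℤ) := by
              rw [hfm, fpow]
          _ = f (p : ℤ) ^ ((n.natAbs).factorization p) := by rw [hcop _ hnd, mul_one]
          _ = f (p : ℤ) ^ (padicValInt p n) := by rw [hv]
      rcases eq_or_lt_of_le (fnonneg (p : ℤ)) with hz | hz
      · -- residual
        refine Or.inr (Or.inl ⟨p, hprime, fun n => ⟨?_, ?_⟩⟩)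
        · rintro ⟨t, rfl⟩
          rw [hfm, ← hz, zero_mul]
        · intro hnd
          have hn0 : n ≠ 0 := fun h => hnd (h ▸ dvd_zero _)
          rw [hform n hn0, padicValInt.eq_zero_of_not_dvd hnd, pow_zero]
      · -- padic
        exact Or.inr (Or.inr (Or.inl ⟨p, hprime, hz, hp.2, hform⟩))
    · -- trivial
      push_neg at hex
      refine Or.inl (fun n hn => ?_)
      rw [fabs]
      have h0 : n.natAbs ≠ 0 := Int.natAbs_ne_zero.mpr hn
      exact le_antisymm (fzle1 _) (hex _ (Nat.pos_of_ne_zero h0))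

end
end

section
/- Let A be a commutative ℂ-algebra, R a positive totally ordered aura with tempered growth, and |·| : A → R a power-multiplicative seminorm whose restriction to ℂ (via the algebra map) is multiplicatively equivalent to the usual complex absolute value, in the sense that for all λ, μ, ν ∈ ℂ one has ‖λ‖·‖ν‖ ≤ ‖μ‖ if and only if |λ|·|ν| ≤ |μ| (values taken at the images of λ, μ, ν in A). Assume |·| has trivial kernel (|a| = 0 implies a = 0) and is both upper and lower bounded: for every nonzero a ∈ A there exist nonzero λ, μ ∈ ℂ with |λ| ≤ |a| ≤ |μ|. Then for every a ∈ A there exists λ ∈ ℂ with |a| = |λ| (value at the image of λ in A), and there exists a seminorm g : A → ℝ≥0 such that for all a, b ∈ A, |a| ≤ |b| if and only if g(a) ≤ g(b). -/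
/-- A tempered power-multiplicative seminorm on a `ℂ`-algebra whose restriction to `ℂ`
is multiplicatively equivalent to the complex absolute value, with trivial kernel,
and which is both upper and lower bounded, takes only values of the form `|λ|` for
`λ ∈ ℂ` and is equivalent to an `ℝ≥0`-valued seminorm. -/
theorem upper_lower_bounded_equiv_real_seminorm
    {A : Type*} [CommRing A] [Algebra ℂ A]
    {R : Type*} [Semifield R] [LinearOrder R]
    (hadd : ∀ x y z t : R, x ≤ z → y ≤ t → x + y ≤ z + t)
    (hmul : ∀ x y z t : R, x ≤ z → y ≤ t → x * y ≤ z * t)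
    (hpos : (0 : R) < 1)
    (htemp : ∀ P : Polynomial ℕ, P ≠ 0 →
      ∀ x : R, (∀ n : ℕ, x ^ n ≤ ((P.eval n : ℕ) : R)) → x ≤ 1)
    (f : A → R)
    (hf0 : f 0 = 0) (hf1 : f 1 = 1)
    (hfm : ∀ a b : A, f (a * b) ≤ f a * f b)
    (hfa : ∀ a b : A, f (a + b) ≤ f a + f b)
    (hpm : ∀ (a : A) (n : ℕ), f (a ^ n) = f a ^ n)
    (hC : ∀ lam mu nu : ℂ, ‖lam‖ * ‖nu‖ ≤ ‖mu‖ ↔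
      f (algebraMap ℂ A lam) * f (algebraMap ℂ A nu) ≤ f (algebraMap ℂ A mu))
    (hker : ∀ a : A, f a = 0 → a = 0)
    (hbd : ∀ a : A, a ≠ 0 → ∃ lam mu : ℂ, lam ≠ 0 ∧ mu ≠ 0 ∧
      f (algebraMap ℂ A lam) ≤ f a ∧ f a ≤ f (algebraMap ℂ A mu)) :
    (∀ a : A, ∃ lam : ℂ, f a = f (algebraMap ℂ A lam)) ∧
      ∃ g : A → NNReal, g 0 = 0 ∧ g 1 = 1 ∧
        (∀ a b : A, g (a * b) ≤ g a * g b) ∧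
        (∀ a b : A, g (a + b) ≤ g a + g b) ∧
        ∀ a b : A, f a ≤ f b ↔ g a ≤ g b := by
  -- Every element of R is nonnegative.
  have hnn : ∀ x : R, (0 : R) ≤ x := by
    intro x
    by_contra hx
    push_neg at hx
    have hx0 : x ≠ 0 := ne_of_lt hx
    have h1 : x * x⁻¹ ≤ 0 * x⁻¹ := hmul _ _ _ _ hx.le le_rfl
    rw [mul_inv_cancel₀ hx0, zero_mul] at h1
    exact (not_le.mpr hpos) h1
  have hmulr : ∀ x y z : R, x ≤ y → x * z ≤ y * z := fun x y z h => hmul _ _ _ _ h le_rfl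
  have hpow : ∀ (x y : R) (n : ℕ), x ≤ y → x ^ n ≤ y ^ n := by
    intro x y n h
    induction n with
    | zero => simp
    | succ k ih => rw [pow_succ, pow_succ]; exact hmul _ _ _ _ ih h
  have hdiv : ∀ x y z : R, z ≠ 0 → x ≤ y * z → x * z⁻¹ ≤ y := by
    intro x y z hz h
    have h2 := hmulr _ _ z⁻¹ h
    rwa [mul_assoc, mul_inv_cancel₀ hz, mul_one] at h2
  -- f of natural numbers
  have hfnat : ∀ n : ℕ, f ((n : A)) ≤ (n : R) := by
    intro n
    induction n with
    | zero => simpa using le_of_eq hf0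
    | succ k ih =>
      push_cast
      calc f ((k : A) + 1) ≤ f (k : A) + f 1 := hfa _ _
        _ ≤ (k : R) + 1 := by rw [hf1]; exact hadd _ _ _ _ ih le_rfl
  have h13 : (1 : R) ≤ ((3 : ℕ) : R) := by
    have h3e : ((3 : ℕ) : R) = 1 + ((2 : ℕ) : R) := by push_cast; ring
    rw [h3e]
    calc (1 : R) = 1 + 0 := (add_zero 1).symm
      _ ≤ 1 + ((2 : ℕ) : R) := hadd _ _ _ _ le_rfl (hnn _)
  -- A is nontrivial, and the structure map from ℂ is injective
  have hA : (0 : A) ≠ 1 := by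
    intro h
    have h2 : (1 : R) = 0 := by rw [← hf1, ← h, hf0]
    exact one_ne_zero h2
  haveI : Nontrivial A := ⟨⟨0, 1, hA⟩⟩
  have hcinj : Function.Injective (algebraMap ℂ A) := RingHom.injective _
  -- order-comparison on ℂ
  have hCmono : ∀ lam mu : ℂ,
      ‖lam‖ ≤ ‖mu‖ ↔ f (algebraMap ℂ A lam) ≤ f (algebraMap ℂ A mu) := by
    intro lam mu
    have h := hC lam mu 1
    simpa [map_one, hf1] using h
  have hCeq : ∀ lam mu : ℂ, ‖lam‖ = ‖mu‖ →
      f (algebraMap ℂ A lam) = f (algebraMap ℂ A mu) :=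
    fun lam mu h => le_antisymm ((hCmono _ _).1 h.le) ((hCmono _ _).1 h.ge)
  -- f is multiplicative on ℂ
  have hMulC : ∀ lam mu : ℂ, f (algebraMap ℂ A (lam * mu)) =
      f (algebraMap ℂ A lam) * f (algebraMap ℂ A mu) := by
    intro lam mu
    refine le_antisymm ?_ ?_
    · rw [map_mul]; exact hfm _ _
    · exact (hC lam (lam * mu) mu).1 (le_of_eq (norm_mul lam mu).symm)
  -- the function φ on the reals
  set φ : ℝ → R := fun t => f (algebraMap ℂ A (t : ℂ)) with hφ
  have φeq_norm : ∀ mu : ℂ, f (algebraMap ℂ A mu) = φ ‖mu‖ := by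
    intro mu
    exact hCeq mu ((‖mu‖ : ℝ) : ℂ) (by rw [Complex.norm_real, Real.norm_eq_abs, abs_of_nonneg (norm_nonneg _)])
  have φmono : ∀ s t : ℝ, 0 ≤ s → 0 ≤ t → (s ≤ t ↔ φ s ≤ φ t) := by
    intro s t hs ht
    have := hCmono (s : ℂ) (t : ℂ)
    rwa [Complex.norm_real, Complex.norm_real, Real.norm_eq_abs, Real.norm_eq_abs, abs_of_nonneg hs, abs_of_nonneg ht] at this
  have φmul : ∀ s t : ℝ, φ (s * t) = φ s * φ t := by
    intro s t
    have := hMulC (s : ℂ) (t : ℂ)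
    rwa [← Complex.ofReal_mul] at this
  have φpow : ∀ (t : ℝ) (n : ℕ), φ (t ^ n) = φ t ^ n := by
    intro t n
    show f _ = _
    rw [Complex.ofReal_pow, map_pow, hpm]
  have φ0 : φ 0 = 0 := by show f _ = _; rw [Complex.ofReal_zero, map_zero, hf0]
  have φ1 : φ 1 = 1 := by show f _ = _; rw [Complex.ofReal_one, map_one, hf1]
  have φne : ∀ t : ℝ, 0 < t → φ t ≠ 0 := by
    intro t ht h
    have h2 := hker _ h
    rw [show (0 : A) = algebraMap ℂ A 0 from (map_zero _).symm] at h2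
    have := hcinj h2
    rw [Complex.ofReal_eq_zero] at this
    exact ht.ne' this
  have φ3 : φ 3 ≤ ((3 : ℕ) : R) := by
    show f _ ≤ _
    rw [show ((3 : ℝ) : ℂ) = ((3 : ℕ) : ℂ) by norm_num, map_natCast]
    exact hfnat 3
  -- the key bound (1 + 1/n)^n ≤ 3 transported through φ
  have hq3 : ∀ n : ℕ, 1 ≤ n → φ (((n : ℝ) + 1) / n) ^ n ≤ ((3 : ℕ) : R) := by
    intro n hn
    have hn' : (0 : ℝ) < n := by exact_mod_cast hn
    rw [← φpow]
    have h3 : (((n : ℝ) + 1) / n) ^ n ≤ 3 := by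
      have h1 : ((n : ℝ) + 1) / n = 1 + 1 / n := by field_simp
      rw [h1]
      calc (1 + 1 / (n : ℝ)) ^ n ≤ Real.exp (1 / n) ^ n := by
            apply pow_le_pow_left₀ (by positivity)
            rw [add_comm]
            exact Real.add_one_le_exp _
        _ = Real.exp 1 := by rw [← Real.exp_nat_mul]; congr 1; field_simp
        _ ≤ 3 := by linarith [Real.exp_one_lt_d9]
    calc φ ((((n : ℝ) + 1) / n) ^ n) ≤ φ 3 := (φmono _ _ (by positivity) (by norm_num)).1 h3
      _ ≤ ((3 : ℕ) : R) := φ3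
  -- Part 1 : every value of f is a value of f on ℂ
  have part1 : ∀ a : A, ∃ lam : ℂ, f a = f (algebraMap ℂ A lam) := by
    intro a
    rcases eq_or_ne a 0 with rfl | ha
    · exact ⟨0, by rw [hf0, map_zero, hf0]⟩
    obtain ⟨lam0, mu0, hl0, hm0, hl, hm⟩ := hbd a ha
    have hfa0 : f a ≠ 0 := fun h => ha (hker a h)
    set S : Set ℝ := {t | 0 ≤ t ∧ φ t ≤ f a} with hS
    have hu0S : ‖lam0‖ ∈ S := ⟨norm_nonneg _, by rw [← φeq_norm]; exact hl⟩
    have hSne : S.Nonempty := ⟨_, hu0S⟩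
    have hbdd : BddAbove S := by
      refine ⟨‖mu0‖, fun t ht => ?_⟩
      have h1 : φ t ≤ φ ‖mu0‖ := le_trans ht.2 (by rw [← φeq_norm]; exact hm)
      exact (φmono t ‖mu0‖ ht.1 (norm_nonneg _)).2 h1
    set r : ℝ := sSup S with hr
    have hr0 : 0 < r :=
      lt_of_lt_of_le (norm_pos_iff.mpr hl0) (le_csSup hbdd hu0S)
    have hφrne : φ r ≠ 0 := φne r hr0
    -- direction (i) : φ r ≤ f a
    have hxle : ∀ n : ℕ, (φ r * (f a)⁻¹) ^ n ≤ ((3 : ℕ) : R) := by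
      intro n
      rcases Nat.eq_zero_or_pos n with rfl | hn
      · simpa using h13
      have hnR : (0 : ℝ) < n := by exact_mod_cast hn
      have hs : r * ((n : ℝ) / (n + 1)) < r := by
        have hlt : (n : ℝ) / (n + 1) < 1 := by
          rw [div_lt_one (by positivity)]; linarith
        calc r * ((n : ℝ) / (n + 1)) < r * 1 := by
              exact mul_lt_mul_of_pos_left hlt hr0
          _ = r := mul_one r
      obtain ⟨t, htS, htgt⟩ := exists_lt_of_lt_csSup hSne hs
      have h1 : φ (r * ((n : ℝ) / (n + 1))) ≤ f a :=
        le_trans ((φmono _ t (by positivity) htS.1).1 htgt.le) htS.2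
      have hr_eq : r = (r * ((n : ℝ) / (n + 1))) * (((n : ℝ) + 1) / n) := by
        field_simp
      have h2 : φ r = φ (r * ((n : ℝ) / (n + 1))) * φ (((n : ℝ) + 1) / n) := by
        rw [← φmul, ← hr_eq]
      have h3 : φ r ^ n ≤ (f a) ^ n * ((3 : ℕ) : R) := by
        rw [h2, mul_pow]
        exact hmul _ _ _ _ (hpow _ _ n h1) (hq3 n hn)
      rw [mul_pow, inv_pow]
      exact hdiv _ _ _ (pow_ne_zero n hfa0) (by rwa [mul_comm] at h3)
    have hφr_le : φ r ≤ f a := by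
      have hx := htemp (Polynomial.C 3) (Polynomial.C_ne_zero.mpr (by norm_num))
        (φ r * (f a)⁻¹) (fun n => by simpa using hxle n)
      have h2 := hmulr _ _ (f a) hx
      rwa [mul_assoc, inv_mul_cancel₀ hfa0, mul_one, one_mul] at h2
    -- direction (ii) : f a ≤ φ r
    have hxle2 : ∀ n : ℕ, (f a * (φ r)⁻¹) ^ n ≤ ((3 : ℕ) : R) := by
      intro n
      rcases Nat.eq_zero_or_pos n with rfl | hn
      · simpa using h13
      have hnR : (0 : ℝ) < n := by exact_mod_cast hn
      have h1q : 1 < ((n : ℝ) + 1) / n := by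
        rw [lt_div_iff₀ hnR]; linarith
      have htr : r < r * (((n : ℝ) + 1) / n) := by
        calc r = r * 1 := (mul_one r).symm
          _ < r * (((n : ℝ) + 1) / n) := mul_lt_mul_of_pos_left h1q hr0
      have htnS : r * (((n : ℝ) + 1) / n) ∉ S :=
        fun hmem => absurd (le_csSup hbdd hmem) (not_le.mpr htr)
      have hfa_le : f a ≤ φ (r * (((n : ℝ) + 1) / n)) := by
        by_contra hcon
        exact htnS ⟨by positivity, le_of_not_ge hcon⟩
      have h6 : (f a) ^ n ≤ φ r ^ n * ((3 : ℕ) : R) := by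
        calc (f a) ^ n ≤ φ (r * (((n : ℝ) + 1) / n)) ^ n := hpow _ _ n hfa_le
          _ = φ r ^ n * φ (((n : ℝ) + 1) / n) ^ n := by rw [φmul, mul_pow]
          _ ≤ φ r ^ n * ((3 : ℕ) : R) := hmul _ _ _ _ le_rfl (hq3 n hn)
      rw [mul_pow, inv_pow]
      exact hdiv _ _ _ (pow_ne_zero n hφrne) (by rwa [mul_comm] at h6)
    have hle_φr : f a ≤ φ r := by
      have hx := htemp (Polynomial.C 3) (Polynomial.C_ne_zero.mpr (by norm_num))
        (f a * (φ r)⁻¹) (fun n => by simpa using hxle2 n)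
      have h2 := hmulr _ _ (φ r) hx
      rwa [mul_assoc, inv_mul_cancel₀ hφrne, mul_one, one_mul] at h2
    exact ⟨(r : ℂ), le_antisymm hle_φr hφr_le⟩
  -- sum lemmas
  have hfsum : ∀ (s : Finset ℕ) (g : ℕ → A), f (∑ k ∈ s, g k) ≤ ∑ k ∈ s, f (g k) := by
    intro s g
    induction s using Finset.induction with
    | empty => simpa using le_of_eq hf0
    | insert _ _ hx ih =>
      rw [Finset.sum_insert hx, Finset.sum_insert hx]
      exact le_trans (hfa _ _) (hadd _ _ _ _ le_rfl ih)
  have hsum_mono : ∀ (s : Finset ℕ) (g h : ℕ → R), (∀ k ∈ s, g k ≤ h k) →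
      ∑ k ∈ s, g k ≤ ∑ k ∈ s, h k := by
    intro s g h hgh
    induction s using Finset.induction with
    | empty => simp
    | insert _ _ hx ih =>
      rw [Finset.sum_insert hx, Finset.sum_insert hx]
      exact hadd _ _ _ _ (hgh _ (Finset.mem_insert_self _ _))
        (ih fun k hk => hgh k (Finset.mem_insert_of_mem hk))
  -- key subadditivity across φ
  have key : ∀ u v : ℝ, 0 ≤ u → 0 ≤ v → ∀ x y : A, f x = φ u → f y = φ v →
      f (x + y) ≤ φ (u + v) := by
    intro u v hu hv x y hx hy
    rcases eq_or_lt_of_le (by positivity : (0:ℝ) ≤ u + v) with heq | hpos'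
    · have hu0 : u = 0 := by linarith
      have hv0 : v = 0 := by linarith
      have hx0 : x = 0 := hker _ (by rw [hx, hu0, φ0])
      have hy0 : y = 0 := hker _ (by rw [hy, hv0, φ0])
      rw [hx0, hy0, add_zero, hf0, ← heq]
      exact hnn _
    have hφuv : φ (u + v) ≠ 0 := φne _ hpos'
    have hbound : ∀ n : ℕ, f (x + y) ^ n ≤ ((n + 1 : ℕ) : R) * φ (u + v) ^ n := by
      intro n
      have hterm : ∀ k ∈ Finset.range (n + 1),
          f (x ^ k * y ^ (n - k) * ((n.choose k : ℕ) : A)) ≤ φ (u + v) ^ n := by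
        intro k hk
        have hreal : u ^ k * v ^ (n - k) * ((n.choose k : ℕ) : ℝ) ≤ (u + v) ^ n := by
          rw [add_pow]
          exact Finset.single_le_sum
            (f := fun k => u ^ k * v ^ (n - k) * ((n.choose k : ℕ) : ℝ))
            (fun i _ => by positivity) hk
        have hfc : f (((n.choose k : ℕ) : A)) = φ ((n.choose k : ℕ) : ℝ) := by
          show _ = f _
          rw [show (((n.choose k : ℕ) : ℝ) : ℂ) = ((n.choose k : ℕ) : ℂ) by push_cast; ring,
            map_natCast]
        calc f (x ^ k * y ^ (n - k) * ((n.choose k : ℕ) : A))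
            ≤ f (x ^ k * y ^ (n - k)) * f (((n.choose k : ℕ) : A)) := hfm _ _
          _ ≤ f (x ^ k) * f (y ^ (n - k)) * f (((n.choose k : ℕ) : A)) :=
              hmulr _ _ _ (hfm _ _)
          _ = φ (u ^ k * v ^ (n - k) * ((n.choose k : ℕ) : ℝ)) := by
              rw [hpm, hpm, hx, hy, hfc, ← φpow, ← φpow, ← φmul, ← φmul]
          _ ≤ φ ((u + v) ^ n) := (φmono _ _ (by positivity) (by positivity)).1 hreal
          _ = φ (u + v) ^ n := φpow _ _
      calc f (x + y) ^ n = f ((x + y) ^ n) := (hpm _ _).symm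
        _ = f (∑ k ∈ Finset.range (n + 1), x ^ k * y ^ (n - k) * ((n.choose k : ℕ) : A)) := by
            rw [add_pow]
        _ ≤ ∑ k ∈ Finset.range (n + 1), f (x ^ k * y ^ (n - k) * ((n.choose k : ℕ) : A)) :=
            hfsum _ _
        _ ≤ ∑ _k ∈ Finset.range (n + 1), φ (u + v) ^ n := hsum_mono _ _ _ hterm
        _ = ((n + 1 : ℕ) : R) * φ (u + v) ^ n := by
            rw [Finset.sum_const, Finset.card_range, nsmul_eq_mul]
    have hxP : ∀ n : ℕ, (f (x + y) * (φ (u + v))⁻¹) ^ n ≤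
        (((Polynomial.X + Polynomial.C 1 : Polynomial ℕ).eval n : ℕ) : R) := by
      intro n
      have h1 : (f (x + y) * (φ (u + v))⁻¹) ^ n ≤ ((n + 1 : ℕ) : R) := by
        rw [mul_pow, inv_pow]
        have hb := hbound n
        exact hdiv _ _ _ (pow_ne_zero n hφuv) hb
      simpa using h1
    have hx1 := htemp (Polynomial.X + Polynomial.C 1) (Polynomial.X_add_C_ne_zero 1) _ hxP
    have h2 := hmulr _ _ (φ (u + v)) hx1
    rwa [mul_assoc, inv_mul_cancel₀ hφuv, mul_one, one_mul] at h2
  -- build g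
  refine ⟨part1, ?_⟩
  choose lam hlam using part1
  have hfφ : ∀ a : A, f a = φ ‖lam a‖ := fun a => (hlam a).trans (φeq_norm _)
  refine ⟨fun a => ‖lam a‖₊, ?_, ?_, ?_, ?_, ?_⟩
  · -- g 0 = 0
    have h1 : algebraMap ℂ A (lam 0) = 0 := hker _ (by rw [← hlam 0, hf0])
    have h2 : lam 0 = 0 := hcinj (by rw [h1, map_zero])
    simp [h2]
  · -- g 1 = 1
    have h1 : f (algebraMap ℂ A (lam 1)) = f (algebraMap ℂ A 1) := by
      rw [← hlam 1, map_one]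
    have h2 : ‖lam 1‖ = ‖(1 : ℂ)‖ :=
      le_antisymm ((hCmono _ _).2 h1.le) ((hCmono _ _).2 h1.ge)
    rw [norm_one] at h2
    ext
    simpa using h2
  · -- submultiplicative
    intro a b
    have h1 : f (algebraMap ℂ A (lam (a * b))) ≤ f (algebraMap ℂ A (lam a * lam b)) := by
      rw [← hlam (a * b), hMulC, ← hlam a, ← hlam b]
      exact hfm a b
    have h2 : ‖lam (a * b)‖ ≤ ‖lam a * lam b‖ := (hCmono _ _).2 h1
    rw [norm_mul] at h2
    have : ‖lam (a * b)‖₊ ≤ ‖lam a‖₊ * ‖lam b‖₊ := by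
      rw [← NNReal.coe_le_coe]
      push_cast
      simpa [coe_nnnorm] using h2
    exact this
  · -- subadditive
    intro a b
    have h1 : f (a + b) ≤ φ (‖lam a‖ + ‖lam b‖) :=
      key _ _ (norm_nonneg _) (norm_nonneg _) a b (hfφ a) (hfφ b)
    rw [hfφ (a + b)] at h1
    have h2 : ‖lam (a + b)‖ ≤ ‖lam a‖ + ‖lam b‖ :=
      (φmono _ _ (norm_nonneg _) (by positivity)).2 h1
    have : ‖lam (a + b)‖₊ ≤ ‖lam a‖₊ + ‖lam b‖₊ := by
      rw [← NNReal.coe_le_coe]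
      push_cast
      simpa [coe_nnnorm] using h2
    exact this
  · -- order equivalence
    intro a b
    rw [hfφ a, hfφ b, ← φmono _ _ (norm_nonneg _) (norm_nonneg _), ← NNReal.coe_le_coe]
    simp [coe_nnnorm]
end

section
/- Let R be a positive totally ordered aura with tempered growth and |·| a power-multiplicative seminorm on the polynomial ring ℂ[X] whose restriction to the constants ℂ is multiplicatively equivalent to the usual complex absolute value, in the sense that for all λ, μ, ν ∈ ℂ one has ‖λ‖·‖ν‖ ≤ ‖μ‖ if and only if |λ|·|ν| ≤ |μ| (values taken at constant polynomials). Then |·| is upper bounded (i.e., for every nonzero P ∈ ℂ[X] there exists a nonzero rational number λ with |P| ≤ |λ|, the value at the constant polynomial λ) if and only if there exist a ∈ ℂ and a nonzero integer n such that |X − a| ≤ |n| (values at the polynomial X − a and at the constant polynomial n). -/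
open Polynomial Finset in
private lemma aux_sum_norm_le (Q : Polynomial ℂ) (s : Finset ℕ) :
    ∑ p ∈ s, ‖Q.coeff p‖ ≤ ∑ k ∈ Q.support, ‖Q.coeff k‖ := by
  rw [← Finset.sum_filter_of_ne (p := fun p => Q.coeff p ≠ 0)
    (fun x _ hx => by simpa [norm_eq_zero] using hx)]
  refine Finset.sum_le_sum_of_subset_of_nonneg ?_ (fun _ _ _ => norm_nonneg _)
  intro p hp
  exact Polynomial.mem_support_iff.mpr (Finset.mem_filter.mp hp).2

open Polynomial Finset in
private lemma aux_coeff_pow_le (Q : Polynomial ℂ) :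
    ∀ (n j : ℕ), ‖(Q ^ n).coeff j‖ ≤ (∑ k ∈ Q.support, ‖Q.coeff k‖) ^ n := by
  set K := ∑ k ∈ Q.support, ‖Q.coeff k‖ with hK
  have Knn : 0 ≤ K := Finset.sum_nonneg fun _ _ => norm_nonneg _
  intro n
  induction n with
  | zero =>
    intro j
    rw [pow_zero, pow_zero, Polynomial.coeff_one]
    split_ifs <;> simp
  | succ n ih =>
    intro j
    rw [pow_succ, Polynomial.coeff_mul]
    have hsumle : ∑ x ∈ Finset.HasAntidiagonal.antidiagonal j, ‖Q.coeff x.2‖ ≤ K := by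
      rw [Finset.Nat.sum_antidiagonal_eq_sum_range_succ_mk]
      have h := Finset.sum_range_reflect (fun k => ‖Q.coeff k‖) (j + 1)
      simp only [Nat.add_sub_cancel] at h
      calc ∑ k ∈ Finset.range (j + 1), ‖Q.coeff ((k, j - k).2)‖
          = ∑ k ∈ Finset.range (j + 1), ‖Q.coeff k‖ := h
        _ ≤ K := aux_sum_norm_le Q _
    calc ‖∑ x ∈ Finset.HasAntidiagonal.antidiagonal j, (Q ^ n).coeff x.1 * Q.coeff x.2‖
        ≤ ∑ x ∈ Finset.HasAntidiagonal.antidiagonal j, ‖(Q ^ n).coeff x.1 * Q.coeff x.2‖ :=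
          norm_sum_le _ _
      _ ≤ ∑ x ∈ Finset.HasAntidiagonal.antidiagonal j, K ^ n * ‖Q.coeff x.2‖ :=
          Finset.sum_le_sum (fun x _ => by
            rw [norm_mul]
            exact mul_le_mul_of_nonneg_right (ih x.1) (norm_nonneg _))
      _ = K ^ n * ∑ x ∈ Finset.HasAntidiagonal.antidiagonal j, ‖Q.coeff x.2‖ := by
          rw [Finset.mul_sum]
      _ ≤ K ^ n * K := mul_le_mul_of_nonneg_left hsumle (pow_nonneg Knn n)
      _ = K ^ (n + 1) := (pow_succ _ _).symm

set_option maxHeartbeats 1000000 in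
open Polynomial in
/-- A tempered power-multiplicative seminorm on `ℂ[X]` whose restriction to the constants
is multiplicatively equivalent to the complex absolute value is upper bounded if and only
if `|X - a| ≤ |n|` for some `a ∈ ℂ` and some nonzero integer `n`. -/
theorem upper_bounded_iff_monomial_bounded
    {R : Type*} [Semifield R] [LinearOrder R]
    (hadd : ∀ x y z t : R, x ≤ z → y ≤ t → x + y ≤ z + t)
    (hmul : ∀ x y z t : R, x ≤ z → y ≤ t → x * y ≤ z * t)
    (hpos : (0 : R) < 1)
    (htemp : ∀ P : Polynomial ℕ, P ≠ 0 →
      ∀ x : R, (∀ n : ℕ, x ^ n ≤ ((P.eval n : ℕ) : R)) → x ≤ 1)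
    (f : Polynomial ℂ → R)
    (hf0 : f 0 = 0) (hf1 : f 1 = 1)
    (hfm : ∀ P Q : Polynomial ℂ, f (P * Q) ≤ f P * f Q)
    (hfa : ∀ P Q : Polynomial ℂ, f (P + Q) ≤ f P + f Q)
    (hpm : ∀ (P : Polynomial ℂ) (n : ℕ), f (P ^ n) = f P ^ n)
    (hC : ∀ lam mu nu : ℂ, ‖lam‖ * ‖nu‖ ≤ ‖mu‖ ↔
      f (C lam) * f (C nu) ≤ f (C mu)) :
    (∀ P : Polynomial ℂ, P ≠ 0 → ∃ lam : ℚ, lam ≠ 0 ∧ f P ≤ f (C (lam : ℂ))) ↔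
      ∃ (a : ℂ) (n : ℤ), n ≠ 0 ∧ f (X - C a) ≤ f (C (n : ℂ)) := by
  -- basic facts about f on constants
  have fC1 : f (C (1 : ℂ)) = 1 := by rw [Polynomial.C_1, hf1]
  have fCle : ∀ a b : ℂ, ‖a‖ ≤ ‖b‖ → f (C a) ≤ f (C b) := by
    intro a b h
    have h2 := (hC a b 1).mp (by simpa using h)
    rw [fC1, mul_one] at h2
    exact h2
  have fCmul : ∀ a b : ℂ, f (C (a * b)) = f (C a) * f (C b) := by
    intro a b
    refine le_antisymm ?_ ((hC a (a * b) b).mp (by rw [← norm_mul]))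
    rw [Polynomial.C_mul]; exact hfm _ _
  have fCne : ∀ a : ℂ, a ≠ 0 → f (C a) ≠ 0 := by
    intro a ha h0
    have h1 : f (C (a * a⁻¹)) = f (C a) * f (C a⁻¹) := fCmul a a⁻¹
    rw [mul_inv_cancel₀ ha, fC1, h0, zero_mul] at h1
    exact hpos.ne' h1
  have hpowle : ∀ a b : R, a ≤ b → ∀ j : ℕ, a ^ j ≤ b ^ j := by
    intro a b h j
    induction j with
    | zero => simp
    | succ j ih => rw [pow_succ, pow_succ]; exact hmul _ _ _ _ ih h
  have hfsum : ∀ (s : Finset ℕ) (g : ℕ → Polynomial ℂ),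
      f (∑ i ∈ s, g i) ≤ ∑ i ∈ s, f (g i) := by
    intro s g
    induction s using Finset.cons_induction with
    | empty => simp [hf0]
    | cons a s ha ih =>
      rw [Finset.sum_cons, Finset.sum_cons]
      exact le_trans (hfa _ _) (hadd _ _ _ _ le_rfl ih)
  have hsumle : ∀ (s : Finset ℕ) (g : ℕ → R) (t : R), (∀ i ∈ s, g i ≤ t) →
      ∑ i ∈ s, g i ≤ (s.card : R) * t := by
    intro s
    induction s using Finset.cons_induction with
    | empty => intro g t _; simp
    | cons a s ha ih =>
      intro g t h
      rw [Finset.sum_cons, Finset.card_cons]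
      calc g a + ∑ i ∈ s, g i ≤ t + (s.card : R) * t :=
            hadd _ _ _ _ (h a (Finset.mem_cons_self a s))
              (ih g t fun i hi => h i (Finset.mem_cons_of_mem hi))
        _ = ((s.card + 1 : ℕ) : R) * t := by push_cast; ring
  constructor
  · -- forward
    intro h
    obtain ⟨lam, hlam, hle⟩ := h X Polynomial.X_ne_zero
    refine ⟨0, (⌈|lam|⌉₊ : ℤ) + 1, by positivity, ?_⟩
    rw [map_zero, sub_zero]
    refine le_trans hle (fCle _ _ ?_)
    have h1 : |(lam : ℝ)| ≤ (⌈|lam|⌉₊ : ℝ) + 1 := by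
      calc |(lam : ℝ)| = ((|lam| : ℚ) : ℝ) := by push_cast; rfl
        _ ≤ (⌈|lam|⌉₊ : ℝ) := by exact_mod_cast Nat.le_ceil _
        _ ≤ (⌈|lam|⌉₊ : ℝ) + 1 := by linarith
    have h3 : ‖(((⌈|lam|⌉₊ : ℤ) + 1 : ℤ) : ℂ)‖ = (⌈|lam|⌉₊ : ℝ) + 1 := by
      rw [Complex.norm_intCast]
      push_cast
      rw [abs_of_nonneg (by positivity)]
    rw [Complex.norm_ratCast, h3]
    exact h1
  · -- backward
    rintro ⟨a, n0, hn0, hXa⟩ P hP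
    obtain ⟨d, hd⟩ : ∃ d, d = P.natDegree := ⟨_, rfl⟩
    obtain ⟨Q, hQ⟩ : ∃ Q, Q = P.comp (X + C a) := ⟨_, rfl⟩
    obtain ⟨K, hKdef⟩ : ∃ K, K = ∑ k ∈ Q.support, ‖Q.coeff k‖ := ⟨_, rfl⟩
    have Knn : (0 : ℝ) ≤ K := hKdef ▸ Finset.sum_nonneg fun _ _ => norm_nonneg _
    obtain ⟨Mq, hMq⟩ : ∃ Mq : ℚ, Mq = (((⌈K⌉₊ + 1) * n0.natAbs ^ d : ℕ) : ℚ) := ⟨_, rfl⟩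
    have hMqne : Mq ≠ 0 := by
      have h1 : n0.natAbs ≠ 0 := Int.natAbs_ne_zero.mpr hn0
      rw [hMq]
      exact_mod_cast Nat.mul_ne_zero (Nat.succ_ne_zero _) (pow_ne_zero _ h1)
    refine ⟨Mq, hMqne, ?_⟩
    obtain ⟨c, hc⟩ : ∃ c, c = f (C (Mq : ℂ)) := ⟨_, rfl⟩
    have hcne : c ≠ 0 := hc ▸ fCne _ (by exact_mod_cast hMqne)
    have hMqnn : (0 : ℝ) ≤ (Mq : ℝ) := by
      rw [hMq]; push_cast; positivity
    have hn0norm : (1 : ℝ) ≤ ‖((n0 : ℤ) : ℂ)‖ := by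
      rw [Complex.norm_intCast]
      exact_mod_cast Int.one_le_abs (by exact_mod_cast hn0)
    have hMreal : K * ‖((n0 : ℤ) : ℂ)‖ ^ d ≤ (Mq : ℝ) := by
      have h1 : ‖((n0 : ℤ) : ℂ)‖ = (n0.natAbs : ℝ) := by
        rw [Complex.norm_intCast, Nat.cast_natAbs, Int.cast_abs]
      have h2 : K ≤ ((⌈K⌉₊ : ℝ) + 1) := le_trans (Nat.le_ceil K) (by linarith)
      rw [h1, hMq]
      push_cast
      have := mul_le_mul_of_nonneg_right h2 (by positivity : (0:ℝ) ≤ (n0.natAbs : ℝ) ^ d)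
      linarith
    have hQP : Q.comp (X - C a) = P := by
      rw [hQ, Polynomial.comp_assoc]
      simp
    have hdQ : Q.natDegree ≤ d := by
      rw [hQ, hd]
      calc (P.comp (X + C a)).natDegree ≤ P.natDegree * (X + C a).natDegree :=
            Polynomial.natDegree_comp_le
        _ = P.natDegree := by rw [Polynomial.natDegree_X_add_C, mul_one]
    -- the key bound
    have key : ∀ n : ℕ, (f P * c⁻¹) ^ n ≤ ((d * n + 1 : ℕ) : R) := by
      intro n
      have h1 : (Q ^ n).natDegree < n * d + 1 :=
        Nat.lt_succ_of_le (le_trans Polynomial.natDegree_pow_le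
          (Nat.mul_le_mul_left n hdQ))
      have e1 : Q ^ n = ∑ j ∈ Finset.range (n * d + 1),
          Polynomial.monomial j ((Q ^ n).coeff j) := Polynomial.as_sum_range' _ _ h1
      have hrep : P ^ n = ∑ j ∈ Finset.range (n * d + 1),
          C ((Q ^ n).coeff j) * (X - C a) ^ j := by
        calc P ^ n = (Q ^ n).comp (X - C a) := by rw [Polynomial.pow_comp, hQP]
          _ = (∑ j ∈ Finset.range (n * d + 1),
              Polynomial.monomial j ((Q ^ n).coeff j)).comp (X - C a) := by
                conv_lhs => rw [e1]
          _ = ∑ j ∈ Finset.range (n * d + 1),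
              C ((Q ^ n).coeff j) * (X - C a) ^ j := by
                rw [Polynomial.comp, Polynomial.eval₂_finset_sum]
                refine Finset.sum_congr rfl fun j _ => ?_
                rw [Polynomial.eval₂_monomial]
      have hterm : ∀ j ∈ Finset.range (n * d + 1),
          f (C ((Q ^ n).coeff j) * (X - C a) ^ j) ≤ c ^ n := by
        intro j hj
        have hjle : j ≤ n * d := Nat.lt_succ_iff.mp (Finset.mem_range.mp hj)
        obtain ⟨e, he⟩ : ∃ e, e = (Q ^ n).coeff j := ⟨_, rfl⟩
        rw [← he]
        have hnorm : ‖e * ((n0 : ℤ) : ℂ) ^ j‖ ≤ ‖((Mq : ℂ)) ^ n‖ := by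
          rw [norm_mul, norm_pow, norm_pow, Complex.norm_ratCast,
            abs_of_nonneg hMqnn]
          calc ‖e‖ * ‖((n0 : ℤ) : ℂ)‖ ^ j
              ≤ K ^ n * ‖((n0 : ℤ) : ℂ)‖ ^ (n * d) := by
                refine mul_le_mul (he ▸ hKdef ▸ aux_coeff_pow_le Q n j)
                  (pow_le_pow_right₀ hn0norm hjle) (by positivity)
                  (pow_nonneg Knn n)
            _ = (K * ‖((n0 : ℤ) : ℂ)‖ ^ d) ^ n := by
                rw [Nat.mul_comm n d, mul_pow, ← pow_mul]
            _ ≤ (Mq : ℝ) ^ n := pow_le_pow_left₀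
                (mul_nonneg Knn (pow_nonneg (norm_nonneg _) d)) hMreal n
        calc f (C e * (X - C a) ^ j)
            ≤ f (C e) * f ((X - C a) ^ j) := hfm _ _
          _ = f (C e) * f (X - C a) ^ j := by rw [hpm]
          _ ≤ f (C e) * f (C ((n0 : ℤ) : ℂ)) ^ j :=
              hmul _ _ _ _ le_rfl (hpowle _ _ hXa j)
          _ = f (C e) * f (C (((n0 : ℤ) : ℂ) ^ j)) := by
              rw [← hpm, ← Polynomial.C_pow]
          _ = f (C (e * ((n0 : ℤ) : ℂ) ^ j)) := (fCmul _ _).symm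
          _ ≤ f (C ((Mq : ℂ) ^ n)) := fCle _ _ hnorm
          _ = c ^ n := by rw [hc, ← hpm, ← Polynomial.C_pow]
      have hbound : f (P ^ n) ≤ ((n * d + 1 : ℕ) : R) * c ^ n := by
        rw [hrep]
        refine le_trans (hfsum _ _) ?_
        have := hsumle (Finset.range (n * d + 1))
          (fun j => f (C ((Q ^ n).coeff j) * (X - C a) ^ j)) (c ^ n) hterm
        rw [Finset.card_range] at this
        exact this
      have hcn : c ^ n ≠ 0 := pow_ne_zero n hcne
      calc (f P * c⁻¹) ^ n = f (P ^ n) * (c ^ n)⁻¹ := by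
            rw [hpm, mul_pow, inv_pow]
        _ ≤ (((n * d + 1 : ℕ) : R) * c ^ n) * (c ^ n)⁻¹ :=
            hmul _ _ _ _ hbound le_rfl
        _ = ((n * d + 1 : ℕ) : R) := by
            rw [mul_assoc, mul_inv_cancel₀ hcn, mul_one]
        _ = ((d * n + 1 : ℕ) : R) := by rw [Nat.mul_comm]
    -- apply tempered growth
    have hply : (Polynomial.C d * Polynomial.X + 1 : Polynomial ℕ) ≠ 0 := by
      intro h
      have := congrArg (fun p => Polynomial.coeff p 0) h
      simp at this
    have hx : f P * c⁻¹ ≤ 1 := by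
      refine htemp (Polynomial.C d * Polynomial.X + 1) hply _ ?_
      intro n
      have : ((Polynomial.C d * Polynomial.X + 1 : Polynomial ℕ).eval n) = d * n + 1 := by
        simp
      rw [this]
      exact key n
    calc f P = (f P * c⁻¹) * c := by
          rw [mul_assoc, inv_mul_cancel₀ hcne, mul_one]
      _ ≤ 1 * c := hmul _ _ _ _ hx le_rfl
      _ = c := one_mul c
      _ = f (C (Mq : ℂ)) := hc
end

section
/- Let K be a field, R a positive totally ordered aura with tempered growth, and |·| : K → R a multiplicative seminorm. If there exists x ∈ K with 0 < |x| < 1, then there exists u ∈ K with |u| > 1 + 1 (the element 2 of R). -/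
/-- If a tempered multiplicative seminorm on a field takes a value strictly between
`0` and `1`, then it also takes a value strictly greater than `2 = 1 + 1`. -/
theorem tempered_mult_seminorm_exists_big_value {K : Type*} [Field K]
    {R : Type*} [Semifield R] [LinearOrder R]
    (hadd : ∀ x y z t : R, x ≤ z → y ≤ t → x + y ≤ z + t)
    (hmul : ∀ x y z t : R, x ≤ z → y ≤ t → x * y ≤ z * t)
    (hpos : (0 : R) < 1)
    (htemp : ∀ P : Polynomial ℕ, P ≠ 0 →
      ∀ x : R, (∀ n : ℕ, x ^ n ≤ ((P.eval n : ℕ) : R)) → x ≤ 1)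
    (f : K → R)
    (hf0 : f 0 = 0) (hf1 : f 1 = 1)
    (hfm : ∀ a b : K, f (a * b) = f a * f b)
    (hfa : ∀ a b : K, f (a + b) ≤ f a + f b)
    (hx : ∃ x : K, 0 < f x ∧ f x < 1) :
    ∃ u : K, (1 : R) + 1 < f u := by
  obtain ⟨x, hx0, hx1⟩ := hx
  have hxne : x ≠ 0 := by
    intro h; rw [h, hf0] at hx0; exact lt_irrefl 0 hx0
  have hinv : f x * f x⁻¹ = 1 := by
    rw [← hfm, mul_inv_cancel₀ hxne, hf1]
  -- f x⁻¹ > 1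
  have hb1 : 1 < f x⁻¹ := by
    by_contra h
    push_neg at h
    have : f x * f x⁻¹ ≤ f x * 1 := hmul _ _ _ _ le_rfl h
    rw [hinv, mul_one] at this
    exact absurd (lt_of_le_of_lt this hx1) (lt_irrefl 1)
  -- powers
  have hpow : ∀ n : ℕ, f (x⁻¹ ^ n) = (f x⁻¹) ^ n := by
    intro n
    induction n with
    | zero => simpa using hf1
    | succ n ih => rw [pow_succ, pow_succ, hfm, ih]
  by_contra hno
  push_neg at hno
  have key := htemp (Polynomial.C 2) (by simp) (f x⁻¹) ?_
  · exact absurd key (not_le.mpr hb1)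
  · intro n
    rw [← hpow]
    have := hno (x⁻¹ ^ n)
    simpa [one_add_one_eq_two] using this
end
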